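/- arXiv:1910.02177 — 8 statements merged into one kernel-verified Lean document; each statement's English description precedes it below -/
import Mathlib

section
/- Let m = ({ρ_i}_{i∈I}, {𝓜_j}_{j∈J}, {E_k}_{k∈K}) be a physical representation with finite index types I, J, K that is not trivial. If the physical model [m] is unique, then Π_{i∈I} det(ρ_i) · Π_{j∈J} det(C_j) = 0, where C_j is the Choi matrix of 𝓜_j; i.e., at least one initial state or one Choi matrix is singular. -/
open Matrix
open scoped ComplexOrder

noncomputable section

/-- d×d complex matrices. -/
abbrev Mat (d : ℕ) := Matrix (Fin d) (Fin d) ℂ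

/-- The Choi matrix `Σ_{a,b} |a⟩⟨b| ⊗ 𝓜(|a⟩⟨b|)` of a linear map on matrices. -/
def choi {d : ℕ} (M : Mat d →ₗ[ℂ] Mat d) : Matrix (Fin d × Fin d) (Fin d × Fin d) ℂ :=
  ∑ a : Fin d, ∑ b : Fin d,
    kroneckerMap (· * ·) (single a b (1 : ℂ)) (M (single a b (1 : ℂ)))

/-- A representation: families of initial states, evolution maps and measurement
operators. -/
structure QRep (d : ℕ) (I J K : Type) where
  ρ : I → Mat d
  M : J → Mat d →ₗ[ℂ] Mat d
  E : K → Mat d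

/-- A representation is physical if the states are positive semidefinite Hermitian with
trace one, the maps are completely positive (positive semidefinite Choi matrix) and
trace-preserving, and the measurement operators `E` are Hermitian with `0 ≤ E ≤ 1`. -/
def QRep.Physical {d : ℕ} {I J K : Type} (m : QRep d I J K) : Prop :=
  (∀ i, (m.ρ i).PosSemidef ∧ (m.ρ i).trace = 1) ∧
  (∀ j, (choi (m.M j)).PosSemidef ∧ ∀ A, (m.M j A).trace = A.trace) ∧
  (∀ k, (m.E k).PosSemidef ∧ ((1 : Mat d) - m.E k).PosSemidef)

/-- The probability `p_m(i, j_1, …, j_N, k) = Tr[E_k 𝓜_{j_N}(⋯𝓜_{j_1}(ρ_i)⋯)]`. -/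
def QRep.prob {d : ℕ} {I J K : Type} (m : QRep d I J K) (i : I) (js : List J) (k : K) : ℂ :=
  (m.E k * js.foldl (fun A j => m.M j A) (m.ρ i)).trace

/-- Two representations are distribution-equivalent if their probability distributions
coincide. -/
def DistEquiv {d : ℕ} {I J K : Type} (m m' : QRep d I J K) : Prop :=
  ∀ (i : I) (js : List J) (k : K), m.prob i js k = m'.prob i js k

/-- The unitary (`anti = false`) or antiunitary (`anti = true`) transformation
`𝓢(A) = uAu†` resp. `𝓢(A) = uAᵀu†` associated with a unitary matrix `u`. -/
def Sfwd {d : ℕ} (u : Mat d) (anti : Bool) (A : Mat d) : Mat d :=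
  if anti then u * Aᵀ * uᴴ else u * A * uᴴ

/-- The inverse of `Sfwd u anti`; for `𝓢 ∈ 𝕊` the dual map `𝓢*` for the trace pairing
coincides with `𝓢⁻¹`. -/
def Sinv {d : ℕ} (u : Mat d) (anti : Bool) (A : Mat d) : Mat d :=
  if anti then (uᴴ * A * u)ᵀ else uᴴ * A * u

/-- `m' = 𝓢(m) = ({𝓢⁻¹(ρ_i)}, {𝓢⁻¹∘𝓜_j∘𝓢}, {𝓢*(E_k)})` for some unitary or
antiunitary transformation `𝓢 ∈ 𝕊`. -/
def RelatedByS {d : ℕ} {I J K : Type} (m m' : QRep d I J K) : Prop :=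
  ∃ u ∈ Matrix.unitaryGroup (Fin d) ℂ, ∃ anti : Bool,
    (∀ i, m'.ρ i = Sinv u anti (m.ρ i)) ∧
    (∀ j A, m'.M j A = Sinv u anti (m.M j (Sfwd u anti A))) ∧
    (∀ k, m'.E k = Sinv u anti (m.E k))

/-- A representation is trivial if all states are maximally mixed, all maps are unital
and all measurement operators are scalar multiples of the identity. -/
def QRep.Trivial {d : ℕ} {I J K : Type} (m : QRep d I J K) : Prop :=
  (∀ i, m.ρ i = ((d : ℂ))⁻¹ • (1 : Mat d)) ∧
  (∀ j, m.M j 1 = 1) ∧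
  (∀ k, ∃ c : ℂ, m.E k = c • (1 : Mat d))


section Helpers

variable {n : Type*} [Fintype n] [DecidableEq n]

omit [DecidableEq n] in
lemma smul_posSemidef {A : Matrix n n ℂ} (hA : A.PosSemidef) {r : ℝ} (hr : 0 ≤ r) :
    ((r : ℂ) • A).PosSemidef := by
  refine Matrix.PosSemidef.of_dotProduct_mulVec_nonneg ?_ ?_
  · unfold Matrix.IsHermitian
    rw [conjTranspose_smul, hA.1.eq]
    congr 1
    simp [Complex.ext_iff]
  · intro x
    rw [smul_mulVec, dotProduct_smul]
    exact mul_nonneg (by exact_mod_cast hr) (hA.dotProduct_mulVec_nonneg x)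

omit [DecidableEq n] in
lemma smul_posSemidef' {A : Matrix n n ℂ} (hA : A.PosSemidef) {z : ℂ} (hz : 0 ≤ z) :
    (z • A).PosSemidef := by
  have hz' := Complex.le_def.mp hz
  have h1 : z = ((z.re : ℝ) : ℂ) := Complex.ext rfl (by simpa using hz'.2.symm)
  rw [h1]
  exact smul_posSemidef hA (by simpa using hz'.1)

lemma smul_one_posSemidef {n' : Type*} [Fintype n'] [DecidableEq n'] {z : ℂ} (hz : 0 ≤ z) :
    (z • (1 : Matrix n' n' ℂ)).PosSemidef :=
  smul_posSemidef' Matrix.PosSemidef.one hz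

lemma posSemidef_trace_nonneg {A : Matrix n n ℂ} (hA : A.PosSemidef) : 0 ≤ A.trace := by
  refine Finset.sum_nonneg fun i _ => ?_
  have := hA.dotProduct_mulVec_nonneg (Pi.single i 1)
  simpa [dotProduct, Matrix.mulVec, Pi.single_apply, Finset.sum_ite_eq, Finset.mul_sum,
    mul_ite] using this

lemma posSemidef_sub_smul_one [Nonempty n] {A : Matrix n n ℂ} (hA : A.PosSemidef)
    (hdet : A.det ≠ 0) : ∃ δ : ℝ, 0 < δ ∧ (A - (δ:ℂ) • 1).PosSemidef := by
  have hH := hA.1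
  have hev : ∀ i, 0 < hH.eigenvalues i := by
    intro i
    rcases lt_or_eq_of_le (hA.eigenvalues_nonneg i) with h | h
    · exact h
    · exfalso; apply hdet
      rw [hH.det_eq_prod_eigenvalues]
      exact Finset.prod_eq_zero (Finset.mem_univ i) (by rw [← h]; norm_num)
  refine ⟨Finset.univ.inf' Finset.univ_nonempty hH.eigenvalues, ?_, ?_⟩
  · obtain ⟨i, _, hi⟩ := Finset.exists_mem_eq_inf' Finset.univ_nonempty hH.eigenvalues
    rw [hi]; exact hev i
  · set δ := Finset.univ.inf' Finset.univ_nonempty hH.eigenvalues with hδ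
    have hkey : A - (δ:ℂ) • 1 =
        (hH.eigenvectorUnitary : Matrix n n ℂ) *
          (diagonal (fun i => ((hH.eigenvalues i - δ : ℝ) : ℂ))) *
          (hH.eigenvectorUnitary : Matrix n n ℂ)ᴴ := by
      have hu : (hH.eigenvectorUnitary : Matrix n n ℂ) *
          (star hH.eigenvectorUnitary : Matrix n n ℂ) = 1 :=
        Matrix.mem_unitaryGroup_iff.mp hH.eigenvectorUnitary.2
      have h1 : A - (δ:ℂ) • 1 =
          (hH.eigenvectorUnitary : Matrix n n ℂ) *
            (diagonal (RCLike.ofReal ∘ hH.eigenvalues) - (δ:ℂ) • 1) *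
            (star hH.eigenvectorUnitary : Matrix n n ℂ) := by
        have hs : A = (hH.eigenvectorUnitary : Matrix n n ℂ) *
            diagonal (RCLike.ofReal ∘ hH.eigenvalues) *
            (star hH.eigenvectorUnitary : Matrix n n ℂ) := by
          have := hH.spectral_theorem
          rwa [Unitary.conjStarAlgAut_apply] at this
        rw [Matrix.mul_sub, Matrix.sub_mul, ← hs]
        congr 1
        rw [Matrix.mul_smul, Matrix.smul_mul, mul_one, hu]
      rw [h1]
      congr 1
      congr 1
      ext i k
      by_cases hik : i = k
      · subst hik; simp [Matrix.diagonal_apply_eq, Matrix.one_apply]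
      · simp [Matrix.diagonal_apply_ne _ hik, Matrix.one_apply, hik]
    rw [hkey]
    apply Matrix.PosSemidef.mul_mul_conjTranspose_same
    rw [Matrix.posSemidef_diagonal_iff]
    intro i
    have : δ ≤ hH.eigenvalues i := Finset.inf'_le _ (Finset.mem_univ i)
    simp only [← Complex.ofReal_zero, Complex.real_le_real]
    linarith

omit [DecidableEq n] in
lemma eq_zero_of_hermitian_trace_sq {A : Matrix n n ℂ} (hA : A.IsHermitian)
    (h : (A * A).trace = 0) : A = 0 := by
  have key : (A * A).trace = ∑ i, ∑ j, (Complex.normSq (A i j) : ℂ) := by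
    simp only [Matrix.trace, Matrix.diag, Matrix.mul_apply]
    congr 1; ext i; congr 1; ext j
    have : A j i = star (A i j) := by
      conv_lhs => rw [← hA.eq]
      rfl
    rw [this]
    exact (Complex.mul_conj _).symm ▸ rfl
  rw [key] at h
  have h2 : ∑ i, ∑ j, Complex.normSq (A i j) = 0 := by
    exact_mod_cast h
  ext i j
  have := (Finset.sum_eq_zero_iff_of_nonneg (fun i _ => Finset.sum_nonneg
    (fun j _ => Complex.normSq_nonneg _))).mp h2 i (Finset.mem_univ i)
  have := (Finset.sum_eq_zero_iff_of_nonneg (fun j _ => Complex.normSq_nonneg _)).mp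
    this j (Finset.mem_univ j)
  simpa using Complex.normSq_eq_zero.mp this

end Helpers

section ChoiHelpers

lemma choi_apply {d : ℕ} (M : Mat d →ₗ[ℂ] Mat d) (p q p' q' : Fin d) :
    choi M (p, q) (p', q') = M (single p p' 1) q q' := by
  unfold choi
  simp only [Matrix.sum_apply, kroneckerMap_apply, Matrix.single, Matrix.of_apply]
  rw [Finset.sum_eq_single p]
  · rw [Finset.sum_eq_single p'] <;> simp +contextual
  · intro a _ ha
    apply Finset.sum_eq_zero
    intro b _
    simp [ha]
  · simp

lemma one_eq_sum_stdBasisMatrix {d : ℕ} :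
    (1 : Mat d) = ∑ p : Fin d, single p p (1 : ℂ) := by
  ext i j
  simp only [Matrix.sum_apply, Matrix.single, Matrix.of_apply, Matrix.one_apply]
  by_cases h : i = j
  · subst h; simp
  · rw [if_neg h]
    symm; apply Finset.sum_eq_zero
    intro p _
    rw [if_neg]
    rintro ⟨rfl, rfl⟩
    exact h rfl

lemma trace_stdBasisMatrix {d : ℕ} (p p' : Fin d) :
    (single p p' (1 : ℂ)).trace = if p = p' then 1 else 0 := by
  simp only [Matrix.trace, Matrix.diag, Matrix.single, Matrix.of_apply]
  by_cases h : p = p'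
  · subst h; simp
  · rw [if_neg h]
    apply Finset.sum_eq_zero
    intro i _
    rw [if_neg]
    rintro ⟨rfl, rfl⟩
    exact h rfl

lemma map_one_apply {d : ℕ} (M : Mat d →ₗ[ℂ] Mat d) (q q' : Fin d) :
    M 1 q q' = ∑ p : Fin d, choi M (p, q) (p, q') := by
  simp only [choi_apply]
  rw [one_eq_sum_stdBasisMatrix, map_sum]
  simp [Matrix.sum_apply]

lemma map_one_posSemidef {d : ℕ} {M : Mat d →ₗ[ℂ] Mat d} (h : (choi M).PosSemidef) :
    (M 1).PosSemidef := by
  refine Matrix.PosSemidef.of_dotProduct_mulVec_nonneg ?_ ?_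
  · ext q q'
    rw [Matrix.conjTranspose_apply, map_one_apply, map_one_apply, star_sum]
    congr 1; ext p
    have := congrFun (congrFun h.1.eq (p, q)) (p, q')
    rw [Matrix.conjTranspose_apply] at this
    exact this
  · intro x
    set C := choi M with hC
    set y : Fin d → Fin d × Fin d → ℂ :=
      fun p pq => if pq.1 = p then x pq.2 else 0 with hy
    have hterm : ∀ p, dotProduct (star (y p)) (C *ᵥ y p)
        = ∑ q, ∑ q', star (x q) * (C (p, q) (p, q') * x q') := by
      intro p
      simp only [dotProduct, mulVec, Fintype.sum_prod_type, Pi.star_apply, hy,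
        apply_ite (star : ℂ → ℂ), star_zero, mul_ite, mul_zero, ite_mul, zero_mul]
      rw [Finset.sum_eq_single p]
      · congr 1; ext q
        simp only [if_pos rfl, ite_true]
        rw [Finset.sum_comm]
        simp only [Finset.sum_ite_eq', Finset.mem_univ, if_true]
        rw [Finset.mul_sum]
      · intro a _ ha
        apply Finset.sum_eq_zero; intro q _
        simp [ha]
      · simp
    have hsum : dotProduct (star x) (M 1 *ᵥ x)
        = ∑ p, dotProduct (star (y p)) (C *ᵥ y p) := by
      have swap : ∀ f : Fin d → Fin d → Fin d → ℂ,
          (∑ a, ∑ b, ∑ c, f a b c) = ∑ c, ∑ a, ∑ b, f a b c := by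
        intro f
        have h1 : ∀ a, (∑ b, ∑ c, f a b c) = ∑ c, ∑ b, f a b c := fun a => Finset.sum_comm
        simp only [h1]
        exact Finset.sum_comm
      simp only [hterm]
      simp only [dotProduct, mulVec, Pi.star_apply, map_one_apply, ← hC,
        Finset.mul_sum, Finset.sum_mul]
      exact swap fun a b c => star (x a) * (C (c, a) (c, b) * x b)
    rw [hsum]
    exact Finset.sum_nonneg fun p _ => h.dotProduct_mulVec_nonneg (y p)

lemma one_kronecker_posSemidef {d : ℕ} {F : Mat d} (hF : F.PosSemidef) :
    (kroneckerMap (· * ·) (1 : Mat d) F).PosSemidef := by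
  refine Matrix.PosSemidef.of_dotProduct_mulVec_nonneg ?_ ?_
  · show _ = _
    ext pq pq'
    obtain ⟨p, q⟩ := pq
    obtain ⟨p', q'⟩ := pq'
    simp only [conjTranspose_apply, kroneckerMap_apply, star_mul', Matrix.one_apply,
      apply_ite (star : ℂ → ℂ), star_one, star_zero]
    have h1 : star (F q' q) = F q q' := congrFun (congrFun hF.1.eq q) q'
    rw [h1]
    by_cases h : p = p' <;> simp [h, eq_comm]
  · intro x
    set z : Fin d → Fin d → ℂ := fun p q => x (p, q) with hz
    have key : dotProduct (star x) (kroneckerMap (· * ·) (1 : Mat d) F *ᵥ x)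
        = ∑ p, dotProduct (star (z p)) (F *ᵥ z p) := by
      simp only [dotProduct, mulVec, Pi.star_apply, Fintype.sum_prod_type,
        kroneckerMap_apply, Matrix.one_apply, ite_mul, one_mul, zero_mul, mul_ite, mul_zero,
        hz]
      refine Finset.sum_congr rfl fun p _ => Finset.sum_congr rfl fun q _ => ?_
      congr 1
      rw [Finset.sum_comm]
      simp [Finset.sum_ite_eq]
    rw [key]
    exact Finset.sum_nonneg fun p _ => hF.dotProduct_mulVec_nonneg (z p)

end ChoiHelpers

section SHelpers

variable {d : ℕ} {u : Mat d}

lemma u_mul_uH (hu : u ∈ Matrix.unitaryGroup (Fin d) ℂ) : u * uᴴ = 1 := by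
  have := Matrix.mem_unitaryGroup_iff.mp hu
  rwa [Matrix.star_eq_conjTranspose] at this

lemma Sfwd_one (hu : u ∈ Matrix.unitaryGroup (Fin d) ℂ) (anti : Bool) :
    Sfwd u anti (1 : Mat d) = 1 := by
  cases anti <;> simp [Sfwd, u_mul_uH hu]

lemma Sinv_trace (hu : u ∈ Matrix.unitaryGroup (Fin d) ℂ) (anti : Bool) (A : Mat d) :
    (Sinv u anti A).trace = A.trace := by
  have h1 := u_mul_uH hu
  cases anti <;>
    simp only [Sinv, Bool.false_eq_true, if_false, if_true, Matrix.trace_transpose] <;>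
    rw [Matrix.trace_mul_cycle, h1, Matrix.one_mul]

lemma Sinv_sq_trace (hu : u ∈ Matrix.unitaryGroup (Fin d) ℂ) (anti : Bool) (A : Mat d) :
    (Sinv u anti A * Sinv u anti A).trace = (A * A).trace := by
  have h1 := u_mul_uH hu
  have key : (uᴴ * A * u) * (uᴴ * A * u) = uᴴ * (A * A) * u := by
    calc (uᴴ * A * u) * (uᴴ * A * u) = uᴴ * A * ((u * uᴴ) * (A * u)) := by
          simp only [Matrix.mul_assoc]
      _ = uᴴ * (A * A) * u := by rw [h1, Matrix.one_mul]; simp only [Matrix.mul_assoc]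
  have key2 : ((uᴴ * A * u) * (uᴴ * A * u)).trace = (A * A).trace := by
    rw [key, Matrix.trace_mul_cycle, h1, Matrix.one_mul]
  cases anti
  · simpa only [Sinv, Bool.false_eq_true, if_false] using key2
  · simp only [Sinv, if_true]
    rw [← Matrix.transpose_mul, Matrix.trace_transpose]
    exact key2

end SHelpers

section ScalarHelpers

lemma scalar_solve1 {e dc s : ℂ} (he0 : e ≠ 0) (he1 : 1 - e ≠ 0) (he2 : 2 - e ≠ 0)
    (hd : dc ≠ 0)
    (h : (1-e)⁻¹ * (1-e)⁻¹ * (s - 2*(e/dc) + (e/dc)*(e/dc)*dc) = s) : s = dc⁻¹ := by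
  field_simp at h
  have hkey2 : ((e * (2 - e)) * (s * dc - 1)) * (dc * dc) = 0 := by linear_combination (dc * dc) * h
  have hkey := (mul_eq_zero.mp hkey2).resolve_right (mul_ne_zero hd hd)
  rcases mul_eq_zero.mp hkey with h' | h'
  · exact absurd h' (mul_ne_zero he0 he2)
  · field_simp
    linear_combination h'

lemma scalar_solve2 {e dc w : ℂ} (he0 : e ≠ 0) (he1 : 1 - e ≠ 0) (he2 : 2 - e ≠ 0)
    (h : w + (2*(e/(1-e)) + (e/(1-e))*(e/(1-e))) * (w - dc) = w) : w = dc := by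
  have hc0 : e / (1-e) ≠ 0 := div_ne_zero he0 he1
  have hkey : (2*(e/(1-e)) + (e/(1-e))*(e/(1-e))) * (w - dc) = 0 := by linear_combination h
  have hfac : (2*(e/(1-e)) + (e/(1-e))*(e/(1-e))) = (e * (2 - e)) / ((1-e)*(1-e)) := by
    field_simp
    ring
  rw [hfac] at hkey
  rcases mul_eq_zero.mp hkey with h' | h'
  · exact absurd h' (div_ne_zero (mul_ne_zero he0 he2) (mul_ne_zero he1 he1))
  · linear_combination h'

lemma scalar_solve3 {e dc t τ : ℂ} (he0 : e ≠ 0) (he1 : 1 - e ≠ 0) (he2 : 2 - e ≠ 0)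
    (hd : dc ≠ 0)
    (h : (1-e)*(1-e)*τ + 2*((1-e)*(e/dc*t))*t + (e/dc*t)*(e/dc*t)*dc = τ) :
    τ * dc = t * t := by
  field_simp at h
  have hkey2 : ((e * (2 - e)) * (τ * dc - t * t)) * (dc * dc) = 0 := by linear_combination -(dc * dc) * h
  have hkey := (mul_eq_zero.mp hkey2).resolve_right (mul_ne_zero hd hd)
  rcases mul_eq_zero.mp hkey with h' | h'
  · exact absurd h' (mul_ne_zero he0 he2)
  · linear_combination h'

end ScalarHelpers

set_option maxHeartbeats 1600000 in
theorem necessary_condition_of_uniqueness {d : ℕ} (hd : 2 ≤ d) {I J K : Type}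
    [Fintype I] [Fintype J] [Fintype K]
    (m : QRep d I J K) (hphys : m.Physical) (hnontriv : ¬ m.Trivial)
    (huniq : ∀ m' : QRep d I J K, m'.Physical → DistEquiv m m' → RelatedByS m m') :
    (∏ i, (m.ρ i).det) * (∏ j, (choi (m.M j)).det) = 0 := by
  by_contra hne
  haveI : Nonempty (Fin d) := ⟨⟨0, by omega⟩⟩
  have hdR : (0 : ℝ) < d := by
    have : 0 < d := by omega
    exact_mod_cast this
  have hdC : (d : ℂ) ≠ 0 := Nat.cast_ne_zero.mpr (by omega)
  obtain ⟨hne1, hne2⟩ := mul_ne_zero_iff.mp hne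
  have hρdet : ∀ i, (m.ρ i).det ≠ 0 := fun i =>
    Finset.prod_ne_zero_iff.mp hne1 i (Finset.mem_univ i)
  have hCdet : ∀ j, (choi (m.M j)).det ≠ 0 := fun j =>
    Finset.prod_ne_zero_iff.mp hne2 j (Finset.mem_univ j)
  obtain ⟨hstate, hmap, hmeas⟩ := hphys
  -- choose gaps
  choose δρ hδρ hδρP using fun i => posSemidef_sub_smul_one (hstate i).1 (hρdet i)
  choose δC hδC hδCP using fun j => posSemidef_sub_smul_one (hmap j).1 (hCdet j)
  -- choose ε
  set S : Finset ℝ := {(1:ℝ)/2} ∪ Finset.univ.image (fun i => d * δρ i) ∪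
      Finset.univ.image (fun j => d * δC j / 2) with hS
  have hSne : S.Nonempty := ⟨1/2, by simp [hS]⟩
  set ε : ℝ := S.min' hSne with hε
  have hε_pos : 0 < ε := by
    have hmem : ε ∈ S := S.min'_mem hSne
    simp only [hS, Finset.mem_union, Finset.mem_singleton, Finset.mem_image] at hmem
    rcases hmem with (h | ⟨i, _, h⟩) | ⟨j, _, h⟩
    · rw [h]; norm_num
    · rw [← h]; exact mul_pos hdR (hδρ i)
    · rw [← h]
      have := mul_pos hdR (hδC j)
      linarith
  have hε_half : ε ≤ 1/2 := Finset.min'_le _ _ (by simp [hS])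
  have hε_i : ∀ i, ε ≤ d * δρ i := by
    intro i
    apply Finset.min'_le
    simp only [hS, Finset.mem_union, Finset.mem_singleton, Finset.mem_image]
    exact Or.inl (Or.inr ⟨i, Finset.mem_univ i, rfl⟩)
  have hε_j : ∀ j, ε ≤ d * δC j / 2 := by
    intro j
    apply Finset.min'_le
    simp only [hS, Finset.mem_union, Finset.mem_singleton, Finset.mem_image]
    exact Or.inr ⟨j, Finset.mem_univ j, rfl⟩
  have hε_lt1 : ε < 1 := by linarith
  -- complex scalars
  set e : ℂ := ((ε : ℝ) : ℂ) with he
  have he0 : e ≠ 0 := by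
    rw [he]; exact_mod_cast ne_of_gt hε_pos
  have he1 : (1 : ℂ) - e ≠ 0 := by
    rw [he]
    rw [show (1 : ℂ) - (ε:ℝ) = ((1 - ε : ℝ) : ℂ) by push_cast; ring]
    exact_mod_cast ne_of_gt (by linarith : (0:ℝ) < 1 - ε)
  have he2 : (2 : ℂ) - e ≠ 0 := by
    rw [he]
    rw [show (2 : ℂ) - (ε:ℝ) = ((2 - ε : ℝ) : ℂ) by push_cast; ring]
    exact_mod_cast ne_of_gt (by linarith : (0:ℝ) < 2 - ε)
  -- the perturbed representation
  set F : J → Mat d := fun j => m.M j 1 with hF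
  set m' : QRep d I J K :=
    { ρ := fun i => (1 - e)⁻¹ • (m.ρ i - (e / d) • 1),
      M := fun j => m.M j +
        (e / ((1 - e) * d)) • ((Matrix.traceLinearMap (Fin d) ℂ ℂ).smulRight (F j - 1)),
      E := fun k => (1 - e) • m.E k + (e / d * (m.E k).trace) • 1 } with hm'
  have hM'apply : ∀ j A, m'.M j A = m.M j A + (e / ((1 - e) * d)) • (A.trace • (F j - 1)) := by
    intro j A
    simp [hm', LinearMap.smulRight_apply]
  have hFtrace : ∀ j, (F j).trace = d := by
    intro j
    rw [hF]
    rw [(hmap j).2 1, Matrix.trace_one]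
    simp
  -- useful nonnegativity facts
  have h1e : (0:ℂ) ≤ 1 - e := by
    rw [he, show (1:ℂ) - (ε:ℝ) = ((1-ε:ℝ):ℂ) by push_cast; ring]
    exact Complex.zero_le_real.mpr (by linarith)
  have hed : (0:ℂ) ≤ e / d := by
    rw [he, show ((ε:ℝ):ℂ) / (d:ℂ) = ((ε/d : ℝ):ℂ) by push_cast; ring]
    exact Complex.zero_le_real.mpr (by positivity)
  -- m' is physical
  have hphys' : m'.Physical := by
    refine ⟨fun i => ⟨?_, ?_⟩, fun j => ⟨?_, fun A => ?_⟩, fun k => ?_⟩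
    · -- states PSD
      show ((1 - e)⁻¹ • (m.ρ i - (e / d) • 1)).PosSemidef
      have hnn : (0:ℝ) ≤ δρ i - ε / d := by
        have := hε_i i
        rw [sub_nonneg, div_le_iff₀ hdR]
        linarith [hε_i i]
      have hsplit : m.ρ i - (e / d) • 1 =
          (m.ρ i - ((δρ i : ℝ) : ℂ) • 1) + (((δρ i - ε / d : ℝ)) : ℂ) • (1 : Mat d) := by
        rw [he]
        ext a b
        simp only [Matrix.sub_apply, Matrix.add_apply, Matrix.smul_apply, Matrix.one_apply,
          smul_eq_mul]
        split_ifs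
        · push_cast
          field_simp
          ring
        · push_cast
          ring
      rw [show ((1:ℂ) - e)⁻¹ = (((1 - ε)⁻¹ : ℝ) : ℂ) from by rw [he]; push_cast; ring]
      apply smul_posSemidef _ (inv_nonneg.mpr (by linarith))
      rw [hsplit]
      exact (hδρP i).add (smul_posSemidef Matrix.PosSemidef.one hnn)
    · -- states trace one
      show ((1 - e)⁻¹ • (m.ρ i - (e / d) • 1)).trace = 1
      simp only [Matrix.trace_smul, Matrix.trace_sub, Matrix.trace_one, (hstate i).2,
        smul_eq_mul, Fintype.card_fin]
      field_simp
    · -- Choi PSD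
      set γ : ℝ := ε / ((1 - ε) * d) with hγ
      have hγC : (e / ((1 - e) * ↑d)) = ((γ : ℝ) : ℂ) := by
        rw [he, hγ]; push_cast; ring
      have hγnn : 0 ≤ γ := by
        rw [hγ]
        have : (0:ℝ) < (1 - ε) * d := by
          apply mul_pos (by linarith) hdR
        positivity
      have hγle : γ ≤ δC j := by
        rw [hγ, div_le_iff₀ (by apply mul_pos (by linarith) hdR)]
        have h2 : δC j * ((1 - ε) * d) ≥ δC j * (d / 2) := by
          apply mul_le_mul_of_nonneg_left _ (le_of_lt (hδC j))
          nlinarith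
        nlinarith [hε_j j]
      have hchoieq : choi (m'.M j) = (choi (m.M j) - ((γ : ℝ) : ℂ) • 1)
          + ((γ : ℝ) : ℂ) • kroneckerMap (· * ·) (1 : Mat d) (F j) := by
        ext pq pq'
        obtain ⟨p, q⟩ := pq
        obtain ⟨p', q'⟩ := pq'
        rw [choi_apply, hM'apply]
        simp only [Matrix.add_apply, Matrix.sub_apply, Matrix.smul_apply, Matrix.one_apply,
          kroneckerMap_apply, choi_apply, trace_stdBasisMatrix, smul_eq_mul, hγC,
          Prod.mk.injEq]
        by_cases hp : p = p' <;> by_cases hq : q = q' <;>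
          simp [hp, hq] <;> ring
      rw [hchoieq]
      apply Matrix.PosSemidef.add
      · have hsplit2 : choi (m.M j) - ((γ : ℝ) : ℂ) • 1 =
            (choi (m.M j) - ((δC j : ℝ) : ℂ) • 1) + (((δC j - γ : ℝ)) : ℂ) • 1 := by
          ext a b
          simp only [Matrix.sub_apply, Matrix.add_apply, Matrix.smul_apply, Matrix.one_apply,
            smul_eq_mul]
          split_ifs <;> push_cast <;> ring
        rw [hsplit2]
        exact (hδCP j).add (smul_posSemidef Matrix.PosSemidef.one (by linarith))
      · apply smul_posSemidef _ hγnn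
        apply one_kronecker_posSemidef
        rw [hF]
        exact map_one_posSemidef (hmap j).1
    · -- trace preserving
      rw [hM'apply]
      simp only [Matrix.trace_add, Matrix.trace_smul, Matrix.trace_sub, Matrix.trace_one,
        smul_eq_mul, hFtrace j, Fintype.card_fin, (hmap j).2 A]
      ring
    · -- measurements
      obtain ⟨hE1, hE2⟩ := hmeas k
      have htE : 0 ≤ (m.E k).trace := posSemidef_trace_nonneg hE1
      have htE' : 0 ≤ (d : ℂ) - (m.E k).trace := by
        have := posSemidef_trace_nonneg hE2
        simpa [Matrix.trace_sub, Matrix.trace_one, Fintype.card_fin] using this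
      constructor
      · show ((1 - e) • m.E k + (e / d * (m.E k).trace) • 1).PosSemidef
        exact (smul_posSemidef' hE1 h1e).add
          (smul_one_posSemidef (mul_nonneg hed htE))
      · show ((1 : Mat d) - ((1 - e) • m.E k + (e / d * (m.E k).trace) • 1)).PosSemidef
        have hsplit : (1 : Mat d) - ((1 - e) • m.E k + (e / d * (m.E k).trace) • 1)
            = (1 - e) • ((1 : Mat d) - m.E k)
              + (e / d * ((d : ℂ) - (m.E k).trace)) • 1 := by
          ext a b
          simp only [Matrix.sub_apply, Matrix.add_apply, Matrix.smul_apply, Matrix.one_apply,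
            smul_eq_mul]
          split_ifs
          · field_simp
            ring
          · ring
        rw [hsplit]
        exact (smul_posSemidef' hE2 h1e).add
          (smul_one_posSemidef (mul_nonneg hed htE'))
  -- m' is distribution-equivalent to m
  have hdist : DistEquiv m m' := by
    set Tinv : Mat d → Mat d := fun B => (1 - e)⁻¹ • (B - (e / d * B.trace) • 1) with hTinv
    have hTtrace : ∀ B : Mat d, (Tinv B).trace = B.trace := by
      intro B
      rw [hTinv]
      simp only [Matrix.trace_smul, Matrix.trace_sub, Matrix.trace_one, smul_eq_mul,
        Fintype.card_fin]
      field_simp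
    have hstep : ∀ j B, m'.M j (Tinv B) = Tinv (m.M j B) := by
      intro j B
      rw [hM'apply]
      have hMT : m.M j (Tinv B) = (1 - e)⁻¹ • (m.M j B - (e / d * B.trace) • F j) := by
        rw [hTinv]
        simp only [_root_.map_smul, map_sub, hF]
      rw [hMT, hTtrace]
      rw [hTinv]
      simp only
      have htr : (m.M j B).trace = B.trace := (hmap j).2 B
      rw [htr]
      ext q q'
      simp only [Matrix.add_apply, Matrix.smul_apply, Matrix.sub_apply, Matrix.one_apply,
        smul_eq_mul]
      field_simp
      split_ifs <;> ring
    have hfold : ∀ (js : List J) (B : Mat d),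
        js.foldl (fun A j => m'.M j A) (Tinv B) = Tinv (js.foldl (fun A j => m.M j A) B) := by
      intro js
      induction js with
      | nil => intro B; rfl
      | cons j js ih =>
        intro B
        simp only [List.foldl_cons, hstep]
        exact ih _
    intro i js k
    unfold QRep.prob
    have hρ' : m'.ρ i = Tinv (m.ρ i) := by
      rw [hTinv]
      simp only [hm', (hstate i).2, mul_one]
    rw [hρ', hfold]
    set B := js.foldl (fun A j => m.M j A) (m.ρ i) with hB
    rw [hTinv]
    simp only [hm']
    rw [show ((1 : ℂ) - e)⁻¹ • (B - (e / ↑d * B.trace) • 1) =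
        (1 - e)⁻¹ • B - ((1 - e)⁻¹ * (e / ↑d * B.trace)) • (1 : Mat d) by
      rw [smul_sub, smul_smul]]
    simp only [Matrix.add_mul, Matrix.mul_add, smul_mul_assoc, mul_smul_comm,
      Matrix.mul_one, Matrix.one_mul, Matrix.mul_sub, Matrix.sub_mul,
      Matrix.trace_add, Matrix.trace_sub, Matrix.trace_smul, Matrix.trace_one,
      smul_eq_mul, Fintype.card_fin]
    field_simp
    ring
  -- so m' is related to m by some S, which forces m to be trivial
  obtain ⟨u, hu, anti, hρrel, hMrel, hErel⟩ := huniq m' hphys' hdist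
  clear_value m' F e ε S
  apply hnontriv
  have hsmul_one_herm : ∀ z : ℂ, star z = z → (z • (1 : Mat d)).IsHermitian := by
    intro z hz
    unfold Matrix.IsHermitian
    rw [Matrix.conjTranspose_smul, Matrix.conjTranspose_one, hz]
  refine ⟨?_, ?_, ?_⟩
  · -- states are maximally mixed
    intro i
    set ρ : Mat d := m.ρ i with hρdef
    set s : ℂ := (ρ * ρ).trace with hs
    have htr1 : ρ.trace = 1 := (hstate i).2
    have hsq : (m'.ρ i * m'.ρ i).trace = s := by
      rw [hρrel i, Sinv_sq_trace hu anti, hs]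
    have hρ'i : m'.ρ i = (1 - e)⁻¹ • (ρ - (e / d) • 1) := by rw [hm']
    have hexp : (m'.ρ i * m'.ρ i).trace
        = (1-e)⁻¹ * (1-e)⁻¹ * (s - 2 * (e/d) + (e/d) * (e/d) * d) := by
      rw [hρ'i]
      simp only [smul_mul_assoc, mul_smul_comm, Matrix.sub_mul, Matrix.mul_sub,
        Matrix.mul_one, Matrix.one_mul, Matrix.trace_smul, Matrix.trace_sub,
        Matrix.trace_one, smul_eq_mul, Fintype.card_fin, htr1, ← hs]
      ring
    have hs_eq : s = ((d:ℂ))⁻¹ := scalar_solve1 he0 he1 he2 hdC (hexp.symm.trans hsq)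
    have hD : ρ - ((d:ℂ))⁻¹ • 1 = 0 := by
      apply eq_zero_of_hermitian_trace_sq
      · exact ((hstate i).1.1.sub (hsmul_one_herm _ (by simp)))
      · simp only [Matrix.sub_mul, Matrix.mul_sub, smul_mul_assoc, mul_smul_comm,
          Matrix.mul_one, Matrix.one_mul, Matrix.trace_sub, Matrix.trace_smul,
          Matrix.trace_one, smul_eq_mul, Fintype.card_fin, htr1, ← hs, hs_eq]
        field_simp
        ring
    exact sub_eq_zero.mp hD
  · -- maps are unital
    intro j
    have hFj : F j = m.M j 1 := by rw [hF]
    have hFH : (F j).IsHermitian := by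
      rw [hFj]; exact (map_one_posSemidef (hmap j).1).1
    set w : ℂ := (F j * F j).trace with hw
    have hsq : (m'.M j 1 * m'.M j 1).trace = w := by
      rw [hMrel j 1, Sfwd_one hu, Sinv_sq_trace hu anti, hw, hFj]
    have hM1 : m'.M j 1 = F j + (e/(1-e)) • (F j - 1) := by
      rw [hM'apply j 1, ← hFj, Matrix.trace_one]
      congr 1
      rw [smul_smul]
      congr 1
      simp only [Fintype.card_fin]
      field_simp
    have hexp : (m'.M j 1 * m'.M j 1).trace
        = w + (2*(e/(1-e)) + (e/(1-e))*(e/(1-e))) * (w - d) := by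
      rw [hM1]
      simp only [Matrix.add_mul, Matrix.mul_add, smul_mul_assoc, mul_smul_comm,
        Matrix.sub_mul, Matrix.mul_sub, Matrix.mul_one, Matrix.one_mul,
        Matrix.trace_add, Matrix.trace_sub, Matrix.trace_smul, Matrix.trace_one,
        smul_eq_mul, Fintype.card_fin, hFtrace j, ← hw]
      ring
    have hw_eq : w = (d:ℂ) := scalar_solve2 he0 he1 he2 (hexp.symm.trans hsq)
    have hD : F j - 1 = 0 := by
      apply eq_zero_of_hermitian_trace_sq (hFH.sub Matrix.isHermitian_one)
      simp only [Matrix.sub_mul, Matrix.mul_sub, Matrix.mul_one, Matrix.one_mul,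
        Matrix.trace_sub, Matrix.trace_one, Fintype.card_fin, hFtrace j, ← hw, hw_eq]
      ring
    have hF1 := sub_eq_zero.mp hD
    rw [hFj] at hF1
    exact hF1
  · -- measurements are scalar
    intro k
    obtain ⟨hE1, hE2⟩ := hmeas k
    set t : ℂ := (m.E k).trace with ht
    set τ : ℂ := (m.E k * m.E k).trace with hτ
    have hsq : (m'.E k * m'.E k).trace = τ := by
      rw [hErel k, Sinv_sq_trace hu anti, hτ]
    have hE'k : m'.E k = (1 - e) • m.E k + (e / d * t) • 1 := by rw [hm']
    have hexp : (m'.E k * m'.E k).trace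
        = (1-e)*(1-e)*τ + 2*((1-e)*(e/d*t))*t + (e/d*t)*(e/d*t)*d := by
      rw [hE'k]
      simp only [Matrix.add_mul, Matrix.mul_add, smul_mul_assoc, mul_smul_comm,
        Matrix.mul_one, Matrix.one_mul, Matrix.trace_add, Matrix.trace_smul,
        Matrix.trace_one, smul_eq_mul, Fintype.card_fin, ← ht, ← hτ]
      ring
    have hτd : τ * d = t * t := scalar_solve3 he0 he1 he2 hdC (hexp.symm.trans hsq)
    have hstart : star t = t := by
      rw [ht, ← Matrix.trace_conjTranspose, hE1.1.eq]
    refine ⟨t / d, ?_⟩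
    have hD : m.E k - (t/d) • 1 = 0 := by
      apply eq_zero_of_hermitian_trace_sq
      · apply hE1.1.sub
        apply hsmul_one_herm
        rw [star_div₀, hstart]
        simp
      · simp only [Matrix.sub_mul, Matrix.mul_sub, smul_mul_assoc, mul_smul_comm,
          Matrix.mul_one, Matrix.one_mul, Matrix.trace_sub, Matrix.trace_smul,
          Matrix.trace_one, smul_eq_mul, Fintype.card_fin, ← ht, ← hτ]
        field_simp
        linear_combination hτd
    exact sub_eq_zero.mp hD
end
end

section
/- The set of super-non-degenerate unitary d×d matrices is dense in the unitary group U(d): for every unitary matrix u and every ε > 0 there exists a super-non-degenerate unitary matrix u' with ‖u' − u‖ < ε. -/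
open Matrix

open MeasureTheory

noncomputable section



section Diagonalize

open scoped Matrix.Norms.L2Operator

variable {d : ℕ}

@[reducible] private noncomputable def matCStarAlgebra (d : ℕ) : CStarAlgebra (Matrix (Fin d) (Fin d) ℂ) where

attribute [local instance] matCStarAlgebra

private def phaseFun (β : ℝ) (z : ℂ) : ℝ :=
  Complex.arg (-(z * Complex.exp (-(β:ℂ) * Complex.I))) + β + Real.pi

private lemma exp_neg_mul_exp (β : ℝ) :
    Complex.exp (-(β:ℂ) * Complex.I) * Complex.exp ((β:ℂ) * Complex.I) = 1 := by
  rw [← Complex.exp_add, neg_mul, neg_add_cancel, Complex.exp_zero]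

private lemma abs_w {β : ℝ} {z : ℂ} (hz : ‖z‖ = 1) :
    ‖(-(z * Complex.exp (-(β:ℂ) * Complex.I)))‖ = 1 := by
  rw [norm_neg, norm_mul, hz, Complex.norm_exp]
  simp

private lemma phaseFun_exp {β : ℝ} {z : ℂ} (hz : ‖z‖ = 1) :
    Complex.exp ((phaseFun β z : ℂ) * Complex.I) = z := by
  set w : ℂ := -(z * Complex.exp (-(β:ℂ) * Complex.I)) with hw_def
  have hw : ‖w‖ = 1 := abs_w hz
  have hw' : Complex.exp ((Complex.arg w : ℂ) * Complex.I) = w := by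
    conv_rhs => rw [← Complex.norm_mul_exp_arg_mul_I w, hw, Complex.ofReal_one, one_mul]
  have hph : ((phaseFun β z : ℝ) : ℂ) = (Complex.arg w : ℂ) + (β : ℂ) + (Real.pi : ℂ) := by
    simp [phaseFun, hw_def]
  rw [hph, add_mul, add_mul, Complex.exp_add, Complex.exp_add, hw', Complex.exp_pi_mul_I, hw_def]
  calc -(z * Complex.exp (-(β:ℂ) * Complex.I)) * Complex.exp ((β:ℂ) * Complex.I) * -1
      = z * (Complex.exp (-(β:ℂ) * Complex.I) * Complex.exp ((β:ℂ) * Complex.I)) := by ring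
    _ = z := by rw [exp_neg_mul_exp, mul_one]

private lemma slit_of_circle {β : ℝ} {z : ℂ} (hz : ‖z‖ = 1)
    (hz' : z ≠ Complex.exp ((β:ℂ) * Complex.I)) :
    -(z * Complex.exp (-(β:ℂ) * Complex.I)) ∈ Complex.slitPlane := by
  set w : ℂ := -(z * Complex.exp (-(β:ℂ) * Complex.I)) with hw_def
  have hw : ‖w‖ = 1 := abs_w hz
  rw [Complex.mem_slitPlane_iff]
  by_contra h
  push_neg at h
  obtain ⟨h1, h2⟩ := h
  have hwre : w = ((w.re : ℝ) : ℂ) := Complex.ext rfl (by simpa using h2)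
  rw [hwre, Complex.norm_real, Real.norm_eq_abs] at hw
  have hre : w.re = -1 := by
    rcases abs_eq (by norm_num : (0:ℝ) ≤ 1) |>.mp hw with h | h
    · linarith
    · exact h
  have hwm1 : w = -1 := by rw [hwre, hre]; norm_num
  apply hz'
  have h3 : z * Complex.exp (-(β:ℂ) * Complex.I) = 1 := by
    rw [hw_def] at hwm1; linear_combination -hwm1
  calc z = z * (Complex.exp (-(β:ℂ) * Complex.I) * Complex.exp ((β:ℂ) * Complex.I)) := by
            rw [exp_neg_mul_exp, mul_one]
    _ = Complex.exp ((β:ℂ) * Complex.I) := by rw [← mul_assoc, h3, one_mul]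

end Diagonalize

section Diagonalize2

open scoped Matrix.Norms.L2Operator

attribute [local instance] matCStarAlgebra

theorem unitary_diagonalize {d : ℕ} (u : Matrix (Fin d) (Fin d) ℂ)
    (hu : u ∈ Matrix.unitaryGroup (Fin d) ℂ) :
    ∃ θ : Fin d → ℝ, ∃ v ∈ Matrix.unitaryGroup (Fin d) ℂ,
      u = v * Matrix.diagonal (fun a => Complex.exp (((θ a : ℝ) : ℂ) * Complex.I)) * vᴴ := by
  haveI hnormal : IsStarNormal u := isStarNormal_of_mem_unitary hu
  have hfin : (spectrum ℂ u).Finite := Matrix.finite_spectrum u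
  have hcirc : spectrum ℂ u ⊆ Metric.sphere (0:ℂ) 1 := spectrum.subset_circle_of_unitary hu
  have hargfin : (Complex.arg '' spectrum ℂ u).Finite := hfin.image _
  have hIoo : (Set.Ioo (-Real.pi) Real.pi).Infinite :=
    Set.Ioo_infinite (by linarith [Real.pi_pos])
  obtain ⟨β, hβIoo, hβarg⟩ : ∃ β ∈ Set.Ioo (-Real.pi) Real.pi, β ∉ Complex.arg '' spectrum ℂ u := by
    by_contra h
    push_neg at h
    exact hIoo (hargfin.subset fun x hx => h x hx)
  have hβspec : Complex.exp ((β:ℂ) * Complex.I) ∉ spectrum ℂ u := by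
    intro hmem
    apply hβarg
    refine ⟨_, hmem, ?_⟩
    rw [Complex.arg_exp_mul_I, toIocMod_eq_self]
    refine ⟨hβIoo.1, ?_⟩
    rw [show -Real.pi + 2 * Real.pi = Real.pi by ring]
    exact le_of_lt hβIoo.2
  have habs : ∀ z ∈ spectrum ℂ u, ‖z‖ = 1 := by
    intro z hzs
    have := hcirc hzs
    simpa [Complex.dist_eq] using this
  have hslit : ∀ z ∈ spectrum ℂ u, -(z * Complex.exp (-(β:ℂ) * Complex.I)) ∈ Complex.slitPlane := by
    intro z hzs
    exact slit_of_circle (habs z hzs) (fun h => hβspec (h ▸ hzs))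
  have hphase_cont : ContinuousOn (phaseFun β) (spectrum ℂ u) := by
    intro z hzs
    apply ContinuousAt.continuousWithinAt
    have hinner : ContinuousAt (fun x : ℂ => -(x * Complex.exp (-(β:ℂ) * Complex.I))) z := by
      fun_prop
    exact (((ContinuousAt.comp (x := z) (Complex.continuousAt_arg (hslit z hzs)) hinner)).add
      continuousAt_const).add continuousAt_const
  set g : ℂ → ℂ := fun z => ((phaseFun β z : ℝ) : ℂ) with hg_def
  have hg_cont : ContinuousOn g (spectrum ℂ u) :=
    Complex.continuous_ofReal.comp_continuousOn hphase_cont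
  set a : Matrix (Fin d) (Fin d) ℂ := cfc g u with ha_def
  have ha_sa : IsSelfAdjoint a := by
    rw [ha_def]
    show star (cfc g u) = cfc g u
    rw [← cfc_star g u]
    exact cfc_congr fun z _ => by simp [hg_def, RCLike.star_def, Complex.conj_ofReal]
  have hIa : IsStarNormal (Complex.I • a) := by
    constructor
    rw [star_smul, ha_sa.star_eq]
    show (star Complex.I • a) * (Complex.I • a) = (Complex.I • a) * (star Complex.I • a)
    rw [smul_mul_smul_comm, smul_mul_smul_comm, mul_comm (star Complex.I) Complex.I]
  have h1 : u = cfc (fun z => Complex.exp (Complex.I • g z)) u := by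
    conv_lhs => rw [← cfc_id ℂ u]
    exact cfc_congr fun z hzs => by
      simp only [id_eq, smul_eq_mul, hg_def]
      rw [mul_comm, phaseFun_exp (habs z hzs)]
  have hexpc : ContinuousOn Complex.exp ((fun z => Complex.I • g z) '' spectrum ℂ u) :=
    Complex.continuous_exp.continuousOn
  have hIg_cont : ContinuousOn (fun z => Complex.I • g z) (spectrum ℂ u) :=
    by fun_prop
  have h2 : cfc (fun z => Complex.exp (Complex.I • g z)) u
      = cfc Complex.exp (cfc (fun z => Complex.I • g z) u) :=
    cfc_comp' Complex.exp (fun z => Complex.I • g z) u hexpc hIg_cont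
  have h3 : cfc (fun z => Complex.I • g z) u = Complex.I • a := by
    rw [ha_def]
    exact cfc_smul Complex.I g u
  have h4 : cfc Complex.exp (Complex.I • a) = NormedSpace.exp (Complex.I • a) := by
    rw [Complex.exp_eq_exp_ℂ]
    exact CFC.exp_eq_normedSpace_exp (ha := hIa)
  have hexp : u = NormedSpace.exp (Complex.I • a) := by rw [h1, h2, h3, h4]
  have hherm : a.IsHermitian := ha_sa
  set V : Matrix (Fin d) (Fin d) ℂ := (hherm.eigenvectorUnitary : Matrix (Fin d) (Fin d) ℂ)
    with hV_def
  have hV : V ∈ Matrix.unitaryGroup (Fin d) ℂ := hherm.eigenvectorUnitary.2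
  have hspec : a = V * Matrix.diagonal (RCLike.ofReal ∘ hherm.eigenvalues) * star V :=
    hherm.spectral_theorem
  have hVinv : V⁻¹ = star V :=
    Matrix.inv_eq_left_inv (by simpa using (Unitary.star_mul_self_of_mem hV))
  have hVunit : IsUnit V := ⟨Unitary.toUnits ⟨V, hV⟩, rfl⟩
  have key : Complex.I • a
      = V * Matrix.diagonal (fun i => Complex.I • ((hherm.eigenvalues i : ℝ) : ℂ)) * V⁻¹ := by
    rw [hVinv]
    show Complex.I • a
      = V * Matrix.diagonal (Complex.I • (RCLike.ofReal ∘ hherm.eigenvalues)) * star V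
    rw [Matrix.diagonal_smul, mul_smul_comm, smul_mul_assoc, ← hspec]
  refine ⟨hherm.eigenvalues, V, hV, ?_⟩
  have hpi : NormedSpace.exp (fun i => Complex.I • ((hherm.eigenvalues i : ℝ) : ℂ))
      = fun i => Complex.exp (((hherm.eigenvalues i : ℝ) : ℂ) * Complex.I) := by
    rw [Pi.exp_def]
    funext i
    rw [← Complex.exp_eq_exp_ℂ, smul_eq_mul, mul_comm]
  conv_lhs => rw [hexp, key, Matrix.exp_conj V _ hVunit, Matrix.exp_diagonal, hpi, hVinv]
  rw [← Matrix.star_eq_conjTranspose]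

end Diagonalize2



-- A: hyperplane null
private lemma hyperplane_null {d : ℕ} (l : (Fin d → ℝ) →ₗ[ℝ] ℝ) (y : Fin d → ℝ)
    (hy : l y ≠ 0) (r : ℝ) : volume {x : Fin d → ℝ | l x = r} = 0 := by
  set x₀ : Fin d → ℝ := (r / l y) • y with hx₀_def
  have hx₀ : l x₀ = r := by
    rw [hx₀_def, _root_.map_smul, smul_eq_mul, div_mul_cancel₀ _ hy]
  set s : AffineSubspace ℝ (Fin d → ℝ) := AffineSubspace.mk' x₀ (LinearMap.ker l) with hs_def
  have hsub : {x : Fin d → ℝ | l x = r} ⊆ (s : Set (Fin d → ℝ)) := by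
    intro x hx
    rw [hs_def]
    rw [AffineSubspace.mem_coe, AffineSubspace.mem_mk']
    rw [LinearMap.mem_ker]
    have : x -ᵥ x₀ = x - x₀ := rfl
    rw [this, map_sub, hx₀, hx.out, sub_self]
  have hne : s ≠ ⊤ := by
    intro htop
    apply hy
    have : x₀ + y ∈ s := htop ▸ AffineSubspace.mem_top ℝ _ _
    rw [hs_def, AffineSubspace.mem_mk'] at this
    have h2 : (x₀ + y) -ᵥ x₀ = y := by
      show (x₀ + y) - x₀ = y
      abel
    rw [h2, LinearMap.mem_ker] at this
    exact this
  exact measure_mono_null hsub (Measure.addHaar_affineSubspace volume s hne)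

-- B: the linear functional and its nonvanishing
private def lin6 {d : ℕ} (c d' e f a b : Fin d) : (Fin d → ℝ) →ₗ[ℝ] ℝ :=
  (LinearMap.proj c : (Fin d → ℝ) →ₗ[ℝ] ℝ) - (LinearMap.proj d' : (Fin d → ℝ) →ₗ[ℝ] ℝ)
    + (LinearMap.proj e : (Fin d → ℝ) →ₗ[ℝ] ℝ) - (LinearMap.proj f : (Fin d → ℝ) →ₗ[ℝ] ℝ)
    - (LinearMap.proj a : (Fin d → ℝ) →ₗ[ℝ] ℝ) + (LinearMap.proj b : (Fin d → ℝ) →ₗ[ℝ] ℝ)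

private lemma lin6_apply {d : ℕ} (c d' e f a b : Fin d) (x : Fin d → ℝ) :
    lin6 c d' e f a b x = x c - x d' + x e - x f - x a + x b := by
  simp [lin6]

private lemma lin6_ne_zero {d : ℕ} {c d' e f a b : Fin d}
    (hcd : c ≠ d') (hef : e ≠ f) (hcf : c ≠ f) (hde : d' ≠ e) :
    ∃ y : Fin d → ℝ, lin6 c d' e f a b y ≠ 0 := by
  by_cases hac : a = c
  · subst hac
    refine ⟨Pi.single e 1, ?_⟩
    rw [lin6_apply]
    simp only [Pi.single_apply]
    split_ifs <;> simp_all <;> norm_num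
  · refine ⟨Pi.single c 1, ?_⟩
    rw [lin6_apply]
    simp only [Pi.single_apply]
    split_ifs <;> simp_all <;> norm_num

-- C: bad set is null
private def badSet (d : ℕ) : Set (Fin d → ℝ) :=
  {x | ∃ c d' e f a b : Fin d, ∃ k : ℤ,
    c ≠ d' ∧ e ≠ f ∧ c ≠ f ∧ d' ≠ e ∧
    x c - x d' + x e - x f - x a + x b = 2 * Real.pi * k}

private lemma badSet_null (d : ℕ) : volume (badSet d) = 0 := by
  have hsub : badSet d ⊆
      ⋃ (c : Fin d) (d' : Fin d) (e : Fin d) (f : Fin d) (a : Fin d) (b : Fin d) (k : ℤ),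
        {x : Fin d → ℝ | c ≠ d' ∧ e ≠ f ∧ c ≠ f ∧ d' ≠ e ∧
          x c - x d' + x e - x f - x a + x b = 2 * Real.pi * k} := by
    rintro x ⟨c, d', e, f, a, b, k, h⟩
    simp only [Set.mem_iUnion]
    exact ⟨c, d', e, f, a, b, k, h⟩
  refine measure_mono_null hsub ?_
  refine measure_iUnion_null fun c => measure_iUnion_null fun d' => measure_iUnion_null fun e =>
    measure_iUnion_null fun f => measure_iUnion_null fun a => measure_iUnion_null fun b =>
    measure_iUnion_null fun k => ?_
  by_cases hconds : c ≠ d' ∧ e ≠ f ∧ c ≠ f ∧ d' ≠ e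
  · obtain ⟨hcd, hef, hcf, hde⟩ := hconds
    obtain ⟨y, hy⟩ := lin6_ne_zero hcd hef hcf hde (a := a) (b := b)
    refine measure_mono_null ?_ (hyperplane_null (lin6 c d' e f a b) y hy (2 * Real.pi * k))
    intro x hx
    rw [Set.mem_setOf_eq, lin6_apply]
    exact hx.2.2.2.2
  · refine measure_mono_null ?_ (measure_empty (μ := volume))
    intro x hx
    exact absurd ⟨hx.1, hx.2.1, hx.2.2.1, hx.2.2.2.1⟩ hconds

-- D: good point near θ
private lemma exists_good_near {d : ℕ} (θ : Fin d → ℝ) {r : ℝ} (hr : 0 < r) :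
    ∃ θ' : Fin d → ℝ, dist θ' θ < r ∧ θ' ∉ badSet d := by
  by_contra h
  push_neg at h
  have hsub : Metric.ball θ r ⊆ badSet d := by
    intro x hx
    exact h x (by simpa [Metric.mem_ball] using hx)
  have : volume (Metric.ball θ r) = 0 :=
    measure_mono_null hsub (badSet_null d)
  exact absurd this (Metric.measure_ball_pos volume θ hr).ne'

attribute [local instance] Matrix.frobeniusNormedAddCommGroup

/-- The super-non-degeneracy condition on a family of eigenphases `θ`: for all indices
`c ≠ d'`, `e ≠ f`, `c ≠ f`, `d' ≠ e`, the product `e^{i(θ_c−θ_{d'})}·e^{i(θ_e−θ_f)}`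
is not of the form `e^{i(θ_a−θ_b)}`. -/
def SuperNonDegPhases {d : ℕ} (θ : Fin d → ℝ) : Prop :=
  ∀ c d' e f : Fin d, c ≠ d' → e ≠ f → c ≠ f → d' ≠ e →
    ∀ a b : Fin d,
      Complex.exp (((θ c - θ d' : ℝ) : ℂ) * Complex.I) *
          Complex.exp (((θ e - θ f : ℝ) : ℂ) * Complex.I) ≠
        Complex.exp (((θ a - θ b : ℝ) : ℂ) * Complex.I)

/-- A unitary matrix is super-non-degenerate if its eigenvalues, listed with
multiplicity as `e^{iθ_a}`, satisfy the super-non-degeneracy condition. -/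
def IsSuperNonDeg {d : ℕ} (u : Matrix (Fin d) (Fin d) ℂ) : Prop :=
  ∃ θ : Fin d → ℝ, ∃ v ∈ Matrix.unitaryGroup (Fin d) ℂ,
    u = v * Matrix.diagonal (fun a => Complex.exp (((θ a : ℝ) : ℂ) * Complex.I)) * vᴴ ∧
    SuperNonDegPhases θ


private lemma frob_norm_le_of_entries {d : ℕ} (M : Matrix (Fin d) (Fin d) ℂ) (C : ℝ)
    (hC : 0 ≤ C) (h : ∀ i j, ‖M i j‖ ≤ C) : ‖M‖ ≤ d * C := by
  rw [Matrix.frobenius_norm_def]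
  simp_rw [show (2:ℝ) = ((2:ℕ):ℝ) by norm_num, Real.rpow_natCast]
  have hsum : (∑ i, ∑ j, ‖M i j‖ ^ 2) ≤ ((d : ℝ) * C) ^ 2 := by
    calc (∑ i, ∑ j, ‖M i j‖ ^ 2) ≤ ∑ _i : Fin d, ∑ _j : Fin d, C ^ 2 := by
          refine Finset.sum_le_sum fun i _ => Finset.sum_le_sum fun j _ => ?_
          exact pow_le_pow_left₀ (norm_nonneg _) (h i j) 2
      _ = ((d : ℝ) * C) ^ 2 := by
          simp [Finset.sum_const]
          ring
  have h2 : (((d : ℝ) * C) ^ 2) ^ (1/2 : ℝ) = (d : ℝ) * C := by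
    rw [← Real.rpow_natCast ((d : ℝ) * C) 2, ← Real.rpow_mul (by positivity)]
    norm_num
  refine le_trans (Real.rpow_le_rpow (by positivity) hsum (by norm_num)) (le_of_eq h2)

private lemma frob_norm_unitary {d : ℕ} {v : Matrix (Fin d) (Fin d) ℂ}
    (hv : v ∈ Matrix.unitaryGroup (Fin d) ℂ) : ‖v‖ ≤ d := by
  have := frob_norm_le_of_entries v 1 zero_le_one fun i j => entry_norm_bound_of_unitary hv i j
  simpa using this

private lemma abs_exp_sub_exp {x y : ℝ} (h : |x - y| ≤ 1) :
    ‖Complex.exp ((x:ℂ) * Complex.I) - Complex.exp ((y:ℂ) * Complex.I)‖ ≤ 2 * |x - y| := by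
  have hfactor : Complex.exp ((x:ℂ) * Complex.I) - Complex.exp ((y:ℂ) * Complex.I)
      = Complex.exp ((y:ℂ) * Complex.I) * (Complex.exp (((x - y : ℝ) : ℂ) * Complex.I) - 1) := by
    rw [mul_sub, mul_one, ← Complex.exp_add]
    push_cast
    ring_nf
  have habs : ‖(((x - y : ℝ) : ℂ) * Complex.I)‖ = |x - y| := by
    rw [norm_mul, Complex.norm_I, mul_one, Complex.norm_real, Real.norm_eq_abs]
  rw [hfactor, norm_mul]
  have h1 : ‖Complex.exp ((y:ℂ) * Complex.I)‖ = 1 := by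
    simpa using Complex.abs_exp_ofReal_mul_I y
  rw [h1, one_mul]
  have h2 : ‖(((x - y : ℝ) : ℂ) * Complex.I)‖ ≤ 1 := by rw [habs]; exact h
  have h3 := Complex.norm_exp_sub_one_le (x := ((x - y : ℝ) : ℂ) * Complex.I) h2
  rw [habs] at h3
  exact h3

private lemma diag_phases_unitary {d : ℕ} (θ : Fin d → ℝ) :
    Matrix.diagonal (fun a => Complex.exp (((θ a : ℝ) : ℂ) * Complex.I))
      ∈ Matrix.unitaryGroup (Fin d) ℂ := by
  rw [Matrix.mem_unitaryGroup_iff]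
  rw [Matrix.star_eq_conjTranspose, Matrix.diagonal_conjTranspose, Matrix.diagonal_mul_diagonal]
  refine Eq.trans (congrArg Matrix.diagonal ?_) Matrix.diagonal_one
  funext a
  show Complex.exp (((θ a : ℝ) : ℂ) * Complex.I) * star (Complex.exp (((θ a : ℝ) : ℂ) * Complex.I)) = 1
  rw [RCLike.star_def, Complex.mul_conj, Complex.normSq_eq_norm_sq, Complex.norm_exp_ofReal_mul_I]
  norm_num

private lemma superNonDeg_of_not_bad {d : ℕ} {θ' : Fin d → ℝ} (hbad : θ' ∉ badSet d) :
    SuperNonDegPhases θ' := by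
  intro c d' e f hcd hef hcf hde a b heq
  rw [← Complex.exp_add] at heq
  obtain ⟨n, hn⟩ := Complex.exp_eq_exp_iff_exists_int.mp heq
  apply hbad
  refine ⟨c, d', e, f, a, b, n, hcd, hef, hcf, hde, ?_⟩
  have him := congrArg Complex.im hn
  simp only [Complex.add_im, Complex.mul_im, Complex.ofReal_re, Complex.I_im, Complex.ofReal_im,
    Complex.I_re, mul_zero, mul_one, zero_mul, add_zero, zero_add, Complex.mul_re,
    Complex.intCast_im, Complex.intCast_re, Complex.re_ofNat, Complex.im_ofNat] at him
  push_cast at him ⊢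
  nlinarith [him, Real.pi_pos]

/-- Lemma A3: super-non-degenerate unitary matrices are dense in the
unitary group `U(d)`. -/
theorem super_non_degenerate_dense {d : ℕ} (hd : 1 ≤ d)
    (u : Matrix (Fin d) (Fin d) ℂ) (hu : u ∈ Matrix.unitaryGroup (Fin d) ℂ)
    (ε : ℝ) (hε : 0 < ε) :
    ∃ u' ∈ Matrix.unitaryGroup (Fin d) ℂ, IsSuperNonDeg u' ∧ ‖u' - u‖ < ε := by

  obtain ⟨θ, v, hv, huvdv⟩ := unitary_diagonalize u hu
  set r : ℝ := min 1 (ε / (2 * (d:ℝ)^3 + 1)) with hr_def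
  have hr : 0 < r := by
    apply lt_min one_pos
    positivity
  have hr1 : r ≤ 1 := min_le_left _ _
  obtain ⟨θ', hθ'dist, hθ'bad⟩ := exists_good_near θ hr
  set D' : Matrix (Fin d) (Fin d) ℂ :=
    Matrix.diagonal (fun a => Complex.exp (((θ' a : ℝ) : ℂ) * Complex.I)) with hD'_def
  set D : Matrix (Fin d) (Fin d) ℂ :=
    Matrix.diagonal (fun a => Complex.exp (((θ a : ℝ) : ℂ) * Complex.I)) with hD_def
  have hcoord : ∀ i, |θ' i - θ i| < r := fun i => by
    calc |θ' i - θ i| = dist (θ' i) (θ i) := (Real.dist_eq _ _).symm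
      _ ≤ dist θ' θ := dist_le_pi_dist θ' θ i
      _ < r := hθ'dist
  refine ⟨v * D' * vᴴ, ?_, ⟨θ', v, hv, rfl, superNonDeg_of_not_bad hθ'bad⟩, ?_⟩
  · rw [← Matrix.star_eq_conjTranspose]
    exact mul_mem (mul_mem hv (diag_phases_unitary θ')) (Unitary.star_mem hv)
  · have hsub : v * D' * vᴴ - u = v * (D' - D) * vᴴ := by
      rw [huvdv, ← sub_mul, ← mul_sub]
    have hDD : ‖D' - D‖ ≤ (d : ℝ) * (2 * r) := by
      apply frob_norm_le_of_entries _ _ (by positivity)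
      intro i j
      rw [hD'_def, hD_def, Matrix.diagonal_sub]
      rcases eq_or_ne i j with rfl | hij
      · rw [Matrix.diagonal_apply_eq]
        calc ‖Complex.exp (((θ' i : ℝ) : ℂ) * Complex.I)
              - Complex.exp (((θ i : ℝ) : ℂ) * Complex.I)‖
            ≤ 2 * |θ' i - θ i| := abs_exp_sub_exp ((hcoord i).le.trans hr1)
          _ ≤ 2 * r := by nlinarith [hcoord i, abs_nonneg (θ' i - θ i)]
      · rw [Matrix.diagonal_apply_ne _ hij]
        simp
        positivity
    have hvnorm : ‖v‖ ≤ (d : ℝ) := frob_norm_unitary hv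
    have hvH : ‖vᴴ‖ = ‖v‖ := Matrix.frobenius_norm_conjTranspose v
    have hchain : ‖v * (D' - D) * vᴴ‖ ≤ (d : ℝ) * ((d : ℝ) * (2 * r)) * (d : ℝ) := by
      calc ‖v * (D' - D) * vᴴ‖ ≤ ‖v * (D' - D)‖ * ‖vᴴ‖ := Matrix.frobenius_norm_mul _ _
        _ ≤ ‖v‖ * ‖D' - D‖ * ‖vᴴ‖ := by
            apply mul_le_mul_of_nonneg_right (Matrix.frobenius_norm_mul _ _) (norm_nonneg _)
        _ ≤ (d : ℝ) * ((d : ℝ) * (2 * r)) * (d : ℝ) := by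
            rw [hvH]
            have h0D : (0:ℝ) ≤ ‖D' - D‖ := norm_nonneg _
            have h0v : (0:ℝ) ≤ ‖v‖ := norm_nonneg _
            have hd0 : (0:ℝ) ≤ (d:ℝ) := by positivity
            have h1 : ‖v‖ * ‖D' - D‖ ≤ (d:ℝ) * ((d:ℝ) * (2 * r)) :=
              mul_le_mul hvnorm hDD h0D hd0
            exact mul_le_mul h1 hvnorm h0v (by positivity)
    rw [hsub]
    refine lt_of_le_of_lt hchain ?_
    have hrle : r ≤ ε / (2 * (d:ℝ)^3 + 1) := min_le_right _ _
    have hdpos : (0:ℝ) < 2 * (d:ℝ)^3 + 1 := by positivity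
    rw [le_div_iff₀ hdpos] at hrle
    have hd1 : (1:ℝ) ≤ (d:ℝ) := by exact_mod_cast hd
    nlinarith [hr, hε]
end
end

section
/- Let T be an invertible linear map on d×d complex matrices such that for every 𝓤 ∈ 𝕌 there exists 𝓢_𝓤 ∈ 𝕊 (depending on 𝓤) with T⁻¹∘𝓤∘T = 𝓢_𝓤⁻¹∘𝓤∘𝓢_𝓤. Then there exists a single 𝓢 ∈ 𝕊 such that T⁻¹∘𝓤∘T = 𝓢⁻¹∘𝓤∘𝓢 for every 𝓤 ∈ 𝕌. -/
open Matrix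

noncomputable section

/-- The set `𝕌` of unitary maps `A ↦ uAu†` on matrices. -/
def UniMapSet (d : ℕ) : Set (Mat d →ₗ[ℂ] Mat d) :=
  {U | ∃ u ∈ Matrix.unitaryGroup (Fin d) ℂ, ∀ A, U A = u * A * uᴴ}

namespace SSA
variable {d : ℕ}

lemma ct_t (A : Mat d) : (Aᵀ)ᴴ = (Aᴴ)ᵀ := by
  ext i j; simp [Matrix.conjTranspose_apply]

lemma umul {u : Mat d} (hu : u ∈ Matrix.unitaryGroup (Fin d) ℂ) : u * uᴴ = 1 := by
  simpa [Matrix.star_eq_conjTranspose] using Matrix.mem_unitaryGroup_iff.mp hu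

lemma umul' {u : Mat d} (hu : u ∈ Matrix.unitaryGroup (Fin d) ℂ) : uᴴ * u = 1 := by
  simpa [Matrix.star_eq_conjTranspose] using Matrix.mem_unitaryGroup_iff'.mp hu

lemma sand {a b : Mat d} (h : b * a = 1) (A : Mat d) : b * (a * A * b) * a = A := by
  rw [show b * (a * A * b) * a = (b*a) * A * (b*a) by simp only [Matrix.mul_assoc], h,
    Matrix.one_mul, Matrix.mul_one]

lemma Sinv_Sfwd {u : Mat d} (hu : u ∈ Matrix.unitaryGroup (Fin d) ℂ) (b : Bool) (A : Mat d) :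
    Sinv u b (Sfwd u b A) = A := by
  cases b <;> simp [Sinv, Sfwd, sand (umul' hu)]

lemma Sfwd_Sinv {u : Mat d} (hu : u ∈ Matrix.unitaryGroup (Fin d) ℂ) (b : Bool) (A : Mat d) :
    Sfwd u b (Sinv u b A) = A := by
  cases b
  · simp [Sinv, Sfwd, sand (umul hu)]
  · simp only [Sinv, Sfwd, if_pos, Matrix.transpose_transpose]
    exact sand (umul hu) A

lemma trace_conj {v : Mat d} (hv : v ∈ Matrix.unitaryGroup (Fin d) ℂ) (A : Mat d) :
    (v * A * vᴴ).trace = A.trace := by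
  rw [Matrix.trace_mul_cycle, umul' hv, Matrix.one_mul]

lemma trace_Sfwd {u : Mat d} (hu : u ∈ Matrix.unitaryGroup (Fin d) ℂ) (b : Bool) (A : Mat d) :
    (Sfwd u b A).trace = A.trace := by
  cases b <;> simp [Sfwd, trace_conj hu, Matrix.trace_transpose]

lemma trace_Sinv {u : Mat d} (hu : u ∈ Matrix.unitaryGroup (Fin d) ℂ) (b : Bool) (A : Mat d) :
    (Sinv u b A).trace = A.trace := by
  have h : ∀ B : Mat d, (uᴴ * B * u).trace = B.trace := by
    intro B; rw [Matrix.trace_mul_cycle, umul hu, Matrix.one_mul]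
  cases b
  · simpa [Sinv] using h A
  · simp only [Sinv, if_pos, Matrix.trace_transpose]; exact h A

lemma star_mem {u : Mat d} (hu : u ∈ Matrix.unitaryGroup (Fin d) ℂ) :
    uᴴ ∈ Matrix.unitaryGroup (Fin d) ℂ := by
  rw [Matrix.mem_unitaryGroup_iff]
  simpa [Matrix.star_eq_conjTranspose] using umul' hu

lemma transpose_mem {u : Mat d} (hu : u ∈ Matrix.unitaryGroup (Fin d) ℂ) :
    uᵀ ∈ Matrix.unitaryGroup (Fin d) ℂ := by
  rw [Matrix.mem_unitaryGroup_iff]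
  calc uᵀ * star uᵀ = uᵀ * (uᴴ)ᵀ := by rw [Matrix.star_eq_conjTranspose, ct_t]
    _ = (uᴴ * u)ᵀ := (Matrix.transpose_mul _ _).symm
    _ = 1 := by rw [umul' hu, Matrix.transpose_one]

lemma mul_mem' {u v : Mat d} (hu : u ∈ Matrix.unitaryGroup (Fin d) ℂ)
    (hv : v ∈ Matrix.unitaryGroup (Fin d) ℂ) : u * v ∈ Matrix.unitaryGroup (Fin d) ℂ :=
  mul_mem hu hv

end SSA

namespace SSA
variable {d : ℕ}

abbrev E (d : ℕ) (i j : Fin d) : Mat d := Matrix.single i j (1:ℂ)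

lemma E_apply (i j k l : Fin d) : E d i j k l = if i = k ∧ j = l then 1 else 0 := by
  simp [Matrix.single]

lemma conj_std_entry (m : Mat d) (i j k l : Fin d) :
    (m * E d i j * mᴴ) k l = m k i * (starRingEnd ℂ) (m l j) := by
  rw [Matrix.mul_apply]
  have : ∀ b, (m * E d i j) k b = if j = b then m k i else 0 := by
    intro b
    rw [Matrix.mul_apply]
    by_cases hb : j = b
    · subst hb; simp [E_apply]
    · simp [E_apply, hb]
  simp only [this, Matrix.conjTranspose_apply, ite_mul, zero_mul]
  simp [Finset.sum_ite_eq, eq_comm]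

lemma diag_sandwich (lam : Fin d → ℂ) (A : Mat d) (k l : Fin d) :
    (Matrix.diagonal lam * A * (Matrix.diagonal lam)ᴴ) k l
      = lam k * A k l * (starRingEnd ℂ) (lam l) := by
  rw [Matrix.diagonal_conjTranspose, Matrix.mul_diagonal, Matrix.diagonal_mul]
  rfl

lemma diag_sandwich_E (lam : Fin d → ℂ) (i j : Fin d) :
    Matrix.diagonal lam * E d i j * (Matrix.diagonal lam)ᴴ
      = (lam i * (starRingEnd ℂ) (lam j)) • E d i j := by
  ext k l
  rw [diag_sandwich]
  by_cases h1 : i = k <;> by_cases h2 : j = l <;>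
    simp [E_apply, h1, h2, Matrix.smul_apply] <;> try ring
  all_goals simp [h1, h2]

lemma struct_zero (T : Mat d ≃ₗ[ℂ] Mat d) (lam : Fin d → ℂ)
    (hgen : ∀ i j k l : Fin d, lam k * (starRingEnd ℂ) (lam l) = lam i * (starRingEnd ℂ) (lam j)
      → (i = j ∧ k = l) ∨ (i = k ∧ j = l))
    (ha : ∀ A, Matrix.diagonal lam * T A * (Matrix.diagonal lam)ᴴ
        = T (Matrix.diagonal lam * A * (Matrix.diagonal lam)ᴴ))
    (i j k l : Fin d) (hno : ¬((i = j ∧ k = l) ∨ (i = k ∧ j = l))) :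
    T (E d i j) k l = 0 := by
  have h := congrFun (congrFun (ha (E d i j)) k) l
  rw [diag_sandwich, diag_sandwich_E, _root_.map_smul] at h
  by_contra hz
  apply hno
  apply hgen
  have h' : lam k * T (E d i j) k l * (starRingEnd ℂ) (lam l)
      = (lam i * (starRingEnd ℂ) (lam j)) * T (E d i j) k l := by
    simpa [Matrix.smul_apply, smul_eq_mul] using h
  have h2 : (lam k * (starRingEnd ℂ) (lam l)) * T (E d i j) k l
      = (lam i * (starRingEnd ℂ) (lam j)) * T (E d i j) k l := by
    rw [← h']; ring
  exact mul_right_cancel₀ hz h2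

end SSA

namespace SSA
variable {d : ℕ}

lemma expand_T (T : Mat d ≃ₗ[ℂ] Mat d) (B : Mat d) (k l : Fin d) :
    (T B) k l = ∑ i, ∑ j, B i j * T (E d i j) k l := by
  conv_lhs => rw [Matrix.matrix_eq_sum_single B]
  rw [map_sum]
  simp only [Matrix.sum_apply]
  apply Finset.sum_congr rfl; intro i _
  rw [map_sum]
  simp only [Matrix.sum_apply]
  apply Finset.sum_congr rfl; intro j _
  rw [show single i j (B i j) = B i j • E d i j from by
    rw [smul_single, smul_eq_mul, mul_one], _root_.map_smul, Matrix.smul_apply,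
    smul_eq_mul]

lemma entry_off (T : Mat d ≃ₗ[ℂ] Mat d)
    (hz : ∀ i j k l : Fin d, ¬((i = j ∧ k = l) ∨ (i = k ∧ j = l)) → T (E d i j) k l = 0)
    (B : Mat d) {k l : Fin d} (hkl : k ≠ l) :
    (T B) k l = T (E d k l) k l * B k l := by
  rw [expand_T]
  rw [Finset.sum_eq_single k]
  · rw [Finset.sum_eq_single l]
    · ring
    · intro j _ hj
      rw [hz k j k l (by tauto), mul_zero]
    · intro hk; exact absurd (Finset.mem_univ l) hk
  · intro b _ hb
    apply Finset.sum_eq_zero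
    intro j _
    rw [hz b j k l (by tauto), mul_zero]
  · intro hk; exact absurd (Finset.mem_univ k) hk

lemma entry_diag (T : Mat d ≃ₗ[ℂ] Mat d)
    (hz : ∀ i j k l : Fin d, ¬((i = j ∧ k = l) ∨ (i = k ∧ j = l)) → T (E d i j) k l = 0)
    (B : Mat d) (k : Fin d) :
    (T B) k k = ∑ a, T (E d a a) k k * B a a := by
  rw [expand_T]
  apply Finset.sum_congr rfl
  intro i _
  rw [Finset.sum_eq_single i]
  · ring
  · intro j _ hj
    have : ¬((i = j ∧ k = k) ∨ (i = k ∧ j = k)) := by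
      rintro (⟨h1, h2⟩ | ⟨h1, h2⟩)
      · exact hj h1.symm
      · exact hj (h2.trans h1.symm)
    rw [hz i j k k this, mul_zero]
  · intro hk; exact absurd (Finset.mem_univ i) hk

end SSA

namespace SSA

/-- `exp(2πi n/N)`. -/
def egen (N : ℕ) (n : ℤ) : ℂ := Complex.exp (2 * ↑Real.pi * Complex.I * ((n : ℂ) / (N : ℂ)))

lemma egen_mul (N : ℕ) (n m : ℤ) : egen N n * egen N m = egen N (n + m) := by
  rw [egen, egen, egen, ← Complex.exp_add]
  congr 1
  push_cast
  ring

lemma egen_conj (N : ℕ) (n : ℤ) : (starRingEnd ℂ) (egen N n) = egen N (-n) := by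
  rw [egen, egen, ← Complex.exp_conj]
  congr 1
  simp only [_root_.map_mul, map_div₀, Complex.conj_I, map_ofNat, Complex.conj_ofReal,
    map_intCast, map_natCast]
  push_cast
  ring

lemma egen_zero (N : ℕ) : egen N 0 = 1 := by simp [egen]

lemma egen_pow (N : ℕ) (n : ℤ) (p : ℕ) : egen N n ^ p = egen N (n * p) := by
  induction p with
  | zero => simp [egen_zero]
  | succ p ih =>
      rw [pow_succ, ih, egen_mul]
      congr 1
      push_cast
      ring

lemma egen_self (N : ℕ) (hN : N ≠ 0) (n : ℤ) : egen N (n * N) = 1 := by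
  rw [egen]
  have hNc : (N : ℂ) ≠ 0 := by exact_mod_cast hN
  rw [show 2 * ↑Real.pi * Complex.I * ((n * N : ℤ) / (N:ℂ)) = n * (2 * ↑Real.pi * Complex.I) by
    push_cast; field_simp]
  rw [Complex.exp_int_mul, Complex.exp_two_pi_mul_I, _root_.one_zpow]

lemma egen_inj (N : ℕ) (hN : N ≠ 0) (n m : ℤ) (hb : |n - m| < N)
    (h : egen N n = egen N m) : n = m := by
  rw [egen, egen, Complex.exp_eq_exp_iff_exists_int] at h
  obtain ⟨t, ht⟩ := h
  have hNc : (N : ℂ) ≠ 0 := by exact_mod_cast hN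
  have h2 : (2:ℂ) * ↑Real.pi * Complex.I ≠ 0 := by
    simp [Real.pi_ne_zero, Complex.I_ne_zero, Complex.ofReal_ne_zero]
  have key : (n : ℂ) = m + t * N := by
    have h3 : 2 * ↑Real.pi * Complex.I * (n:ℂ) = 2 * ↑Real.pi * Complex.I * ((m:ℂ) + t * N) := by
      calc 2 * ↑Real.pi * Complex.I * (n:ℂ)
          = (2 * ↑Real.pi * Complex.I * ((n:ℂ)/(N:ℂ))) * N := by field_simp
        _ = (2 * ↑Real.pi * Complex.I * ((m:ℂ)/(N:ℂ)) + t * (2 * ↑Real.pi * Complex.I)) * N := by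
            rw [ht]
        _ = 2 * ↑Real.pi * Complex.I * ((m:ℂ) + t * N) := by field_simp
    exact mul_left_cancel₀ h2 h3
  have kz : n = m + t * N := by exact_mod_cast key
  have htabs : |t| * (N:ℤ) < N := by
    have hnm : n - m = t * N := by omega
    rw [hnm, abs_mul, abs_of_nonneg (by positivity : (0:ℤ) ≤ (N:ℤ))] at hb
    exact hb
  have ht0 : t = 0 := by
    by_contra htne
    have h1 : (1:ℤ) ≤ |t| := Int.one_le_abs (by omega)
    have h4 : (N:ℤ) ≤ |t| * N := le_mul_of_one_le_left (by positivity) h1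
    omega
  rw [ht0] at kz
  simp at kz
  omega

end SSA

namespace SSA

lemma pow4_ord (p q r s : ℕ) (hpq : p ≤ q) (hrs : r ≤ s)
    (h : 4^p + 4^q = 4^r + 4^s) : p = r ∧ q = s := by
  have hinj : Function.Injective (fun n : ℕ => 4 ^ n) :=
    fun a b hab => Nat.pow_right_injective (by norm_num) hab
  have hqs : q = s := by
    by_contra hne
    rcases lt_or_gt_of_ne hne with hlt | hgt
    · have h1 : (4:ℕ)^p ≤ 4^q := Nat.pow_le_pow_right (by norm_num) hpq
      have h2 : (4:ℕ)^(q+1) ≤ 4^s := Nat.pow_le_pow_right (by norm_num) hlt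
      have h3 : (0:ℕ) < 4^q := Nat.pow_pos (by norm_num)
      rw [pow_succ] at h2
      have h4 : (4:ℕ)^p + 4^q < 4^r + 4^s := by
        have : (4:ℕ)^p + 4^q < 4^q * 4 := by omega
        have h5 : (4:ℕ)^q * 4 ≤ 4^r + 4^s := le_trans h2 (Nat.le_add_left _ _)
        omega
      omega
    · have h1 : (4:ℕ)^r ≤ 4^s := Nat.pow_le_pow_right (by norm_num) hrs
      have h2 : (4:ℕ)^(s+1) ≤ 4^q := Nat.pow_le_pow_right (by norm_num) hgt
      have h3 : (0:ℕ) < 4^s := Nat.pow_pos (by norm_num)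
      rw [pow_succ] at h2
      have h4 : (4:ℕ)^r + 4^s < 4^p + 4^q := by
        have : (4:ℕ)^r + 4^s < 4^s * 4 := by omega
        have h5 : (4:ℕ)^s * 4 ≤ 4^p + 4^q := le_trans h2 (Nat.le_add_left _ _)
        omega
      omega
  subst hqs
  have : (4:ℕ)^p = 4^r := by omega
  exact ⟨hinj this, rfl⟩

lemma pow4_pairs (p q r s : ℕ) (h : 4^p + 4^q = 4^r + 4^s) :
    (p = r ∧ q = s) ∨ (p = s ∧ q = r) := by
  rcases le_total p q with hpq | hqp <;> rcases le_total r s with hrs | hsr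
  · exact Or.inl (pow4_ord p q r s hpq hrs h)
  · have := pow4_ord p q s r hpq hsr (by omega)
    exact Or.inr ⟨this.1, this.2⟩
  · have := pow4_ord q p r s hqp hrs (by omega)
    exact Or.inr ⟨this.2, this.1⟩
  · have := pow4_ord q p s r hqp hsr (by omega)
    exact Or.inl ⟨this.2, this.1⟩

/-- The generic eigenvalue family. -/
def lamgen (d : ℕ) (k : Fin d) : ℂ := egen (4^(d+1)) (4^(k:ℕ))

lemma lamgen_mul_conj (d : ℕ) (k l : Fin d) :
    lamgen d k * (starRingEnd ℂ) (lamgen d l) = egen (4^(d+1)) (4^(k:ℕ) - 4^(l:ℕ)) := by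
  rw [lamgen, lamgen, egen_conj, egen_mul, sub_eq_add_neg]

lemma lamgen_unit (d : ℕ) (k : Fin d) : lamgen d k * (starRingEnd ℂ) (lamgen d k) = 1 := by
  rw [lamgen_mul_conj]
  simp [egen_zero]

lemma pow4_lt (d : ℕ) (k : Fin d) : (4:ℤ)^(k:ℕ) < 4^d := by
  have : (4:ℤ)^(k:ℕ) < 4^d := pow_lt_pow_right₀ (by norm_num) k.isLt
  exact this

lemma lamgen_gen (d : ℕ) (i j k l : Fin d)
    (h : lamgen d k * (starRingEnd ℂ) (lamgen d l) = lamgen d i * (starRingEnd ℂ) (lamgen d j)) :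
    (i = j ∧ k = l) ∨ (i = k ∧ j = l) := by
  rw [lamgen_mul_conj, lamgen_mul_conj] at h
  have hN : (4:ℕ)^(d+1) ≠ 0 := by positivity
  have hcast : (((4:ℕ)^(d+1) : ℕ) : ℤ) = (4:ℤ)^(d+1) := by push_cast; ring
  have hb' : |(4^(k:ℕ) - 4^(l:ℕ)) - (4^(i:ℕ) - 4^(j:ℕ))| < (4:ℤ)^(d+1) := by
    have h1 := pow4_lt d k
    have h2 := pow4_lt d l
    have h3 := pow4_lt d i
    have h4 := pow4_lt d j
    have p1 : (0:ℤ) < 4^(k:ℕ) := by positivity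
    have p2 : (0:ℤ) < 4^(l:ℕ) := by positivity
    have p3 : (0:ℤ) < 4^(i:ℕ) := by positivity
    have p4 : (0:ℤ) < 4^(j:ℕ) := by positivity
    have hd4 : (4:ℤ)^(d+1) = 4 * 4^d := by rw [pow_succ]; ring
    rw [abs_lt]
    constructor <;> omega
  have hb : |(4^(k:ℕ) - 4^(l:ℕ)) - (4^(i:ℕ) - 4^(j:ℕ))| < (((4:ℕ)^(d+1) : ℕ) : ℤ) := by
    rw [hcast]; exact hb'
  have heq := egen_inj _ hN _ _ hb h
  push_cast at heq
  have heq2 : (4:ℤ)^(k:ℕ) + 4^(j:ℕ) = 4^(i:ℕ) + 4^(l:ℕ) := by omega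
  have heqn : (4:ℕ)^(k:ℕ) + 4^(j:ℕ) = 4^(i:ℕ) + 4^(l:ℕ) := by exact_mod_cast heq2
  rcases pow4_pairs _ _ _ _ heqn with ⟨h1, h2⟩ | ⟨h1, h2⟩
  · -- k = i, j = l
    exact Or.inr ⟨Fin.ext h1.symm, Fin.ext h2⟩
  · -- k = l, j = i
    exact Or.inl ⟨Fin.ext h2.symm, Fin.ext h1⟩

end SSA


namespace SSA
variable {d : ℕ}

/-- normalization constant 1/√d -/
def cF (d : ℕ) : ℂ := ((Real.sqrt d : ℝ) : ℂ)⁻¹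

lemma cF_conj (d : ℕ) : (starRingEnd ℂ) (cF d) = cF d := by
  rw [cF, map_inv₀, Complex.conj_ofReal]

lemma cF_ne (hd : 0 < d) : cF d ≠ 0 := by
  rw [cF]
  apply inv_ne_zero
  simp only [ne_eq, Complex.ofReal_eq_zero]
  positivity

lemma cF_sq (hd : 0 < d) : cF d * cF d = (d : ℂ)⁻¹ := by
  rw [cF, ← mul_inv, ← Complex.ofReal_mul, Real.mul_self_sqrt (by positivity)]
  simp

/-- The Fourier matrix. -/
def Fou (d : ℕ) : Mat d := Matrix.of fun k l => egen d ((k:ℕ) * (l:ℕ)) * cF d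

lemma Fou_apply (k l : Fin d) : Fou d k l = egen d ((k:ℕ) * (l:ℕ)) * cF d := rfl

lemma egen_ne_zero (N : ℕ) (n : ℤ) : egen N n ≠ 0 := Complex.exp_ne_zero _

lemma Fou_ne_zero (hd : 0 < d) (k l : Fin d) : Fou d k l ≠ 0 :=
  mul_ne_zero (egen_ne_zero _ _) (cF_ne hd)

lemma egen_ne_one (hN : 0 < d) (r : ℤ) (hr : r ≠ 0) (hb : |r| < d) : egen d r ≠ 1 := by
  intro h
  rw [show (1:ℂ) = egen d 0 from (egen_zero d).symm] at h
  exact hr (egen_inj d (by omega) r 0 (by simpa using hb) h)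

lemma egen_geom (hN : d ≠ 0) (r : ℤ) (hr : egen d r ≠ 1) :
    ∑ a : Fin d, egen d (r * (a:ℕ)) = 0 := by
  have : ∀ a : Fin d, egen d (r * (a:ℕ)) = (egen d r)^(a:ℕ) := by
    intro a; rw [egen_pow]
  simp only [this]
  rw [Fin.sum_univ_eq_sum_range (fun n => (egen d r)^n) d, geom_sum_eq hr]
  rw [show (egen d r)^d = egen d (r * d) from by rw [egen_pow], egen_self d hN, sub_self,
    zero_div]

lemma Fou_mem (hd : 0 < d) : Fou d ∈ Matrix.unitaryGroup (Fin d) ℂ := by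
  rw [Matrix.mem_unitaryGroup_iff]
  ext k l
  rw [Matrix.star_eq_conjTranspose, Matrix.mul_apply]
  have hterm : ∀ a : Fin d, Fou d k a * (Fou d)ᴴ a l
      = egen d (((k:ℕ) - (l:ℕ)) * (a:ℕ)) * (cF d * cF d) := by
    intro a
    rw [Matrix.conjTranspose_apply, Fou_apply, Fou_apply]
    simp only [star_mul', Complex.star_def, egen_conj, cF_conj]
    rw [show egen d ((k:ℕ)*(a:ℕ)) * cF d * (egen d (-((l:ℕ)*(a:ℕ))) * cF d)
        = (egen d ((k:ℕ)*(a:ℕ)) * egen d (-((l:ℕ)*(a:ℕ)))) * (cF d * cF d) from by ring,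
      egen_mul]
    congr 2
    push_cast
    ring
  simp only [hterm]
  rw [← Finset.sum_mul]
  by_cases hkl : k = l
  · subst hkl
    simp only [sub_self, zero_mul, egen_zero]
    rw [Finset.sum_const, Finset.card_univ, Fintype.card_fin]
    rw [cF_sq hd, Matrix.one_apply_eq]
    simp [mul_inv_cancel₀ (show (d:ℂ) ≠ 0 by exact_mod_cast hd.ne')]
  · have hne : egen d ((k:ℕ) - (l:ℕ)) ≠ 1 := by
      apply egen_ne_one hd
      · have := k.isLt; have := l.isLt
        intro hc
        apply hkl
        apply Fin.ext
        omega
      · have := k.isLt; have := l.isLt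
        rw [abs_lt]
        constructor <;> omega
    rw [egen_geom hd.ne' _ hne, zero_mul, Matrix.one_apply_ne hkl]

lemma Fou_row0 (z j : Fin d) (h0 : (z:ℕ) = 0) : Fou d z j = cF d := by
  rw [Fou_apply, h0]
  simp [egen_zero]

end SSA

namespace SSA
variable {d : ℕ}

/-- permutation matrix: `P e_l = e_{π l}`. -/
def Pmat (d : ℕ) (π : Equiv.Perm (Fin d)) : Mat d :=
  Matrix.of fun k l => if k = π l then 1 else 0

lemma Pmat_apply (π : Equiv.Perm (Fin d)) (k l : Fin d) :
    Pmat d π k l = if k = π l then 1 else 0 := rfl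

lemma Pmat_mul_apply (π : Equiv.Perm (Fin d)) (B : Mat d) (k b : Fin d) :
    (Pmat d π * B) k b = B (π.symm k) b := by
  rw [Matrix.mul_apply]
  rw [Finset.sum_eq_single (π.symm k)]
  · rw [Pmat_apply]
    simp
  · intro a _ ha
    rw [Pmat_apply, if_neg, zero_mul]
    intro hc
    exact ha (by rw [hc]; simp)
  · intro hk; exact absurd (Finset.mem_univ _) hk

lemma Pmat_conj (π : Equiv.Perm (Fin d)) (B : Mat d) (k l : Fin d) :
    (Pmat d π * B * (Pmat d π)ᴴ) k l = B (π.symm k) (π.symm l) := by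
  rw [Matrix.mul_apply]
  rw [Finset.sum_eq_single (π.symm l)]
  · rw [Pmat_mul_apply, Matrix.conjTranspose_apply, Pmat_apply]
    simp
  · intro b _ hb
    rw [Matrix.conjTranspose_apply, Pmat_apply, if_neg, star_zero, mul_zero]
    intro hc
    exact hb (by rw [hc]; simp)
  · intro hk; exact absurd (Finset.mem_univ _) hk

lemma Pmat_mem (π : Equiv.Perm (Fin d)) : Pmat d π ∈ Matrix.unitaryGroup (Fin d) ℂ := by
  rw [Matrix.mem_unitaryGroup_iff]
  ext k l
  rw [Matrix.star_eq_conjTranspose, Matrix.mul_apply]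
  rw [Finset.sum_eq_single (π.symm k)]
  · rw [Matrix.conjTranspose_apply, Pmat_apply, Pmat_apply]
    by_cases hkl : k = l
    · subst hkl
      simp
    · rw [if_pos (by simp), if_neg (by intro hc; exact hkl (by rw [hc]; simp)), star_zero,
        mul_zero, Matrix.one_apply_ne hkl]
  · intro a _ ha
    rw [Pmat_apply, if_neg, zero_mul]
    intro hc
    exact ha (by rw [hc]; simp)
  · intro hk; exact absurd (Finset.mem_univ _) hk

end SSA

namespace SSA
variable {d : ℕ}

lemma conj_ne {z : ℂ} (hz : z ≠ 0) : (starRingEnd ℂ) z ≠ 0 := by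
  simpa using hz

lemma key (hd : 2 ≤ d) (T : Mat d ≃ₗ[ℂ] Mat d)
    (hz : ∀ i j k l : Fin d, ¬((i = j ∧ k = l) ∨ (i = k ∧ j = l)) → T (E d i j) k l = 0)
    (hb : ∀ v ∈ Matrix.unitaryGroup (Fin d) ℂ, ∃ m ∈ Matrix.unitaryGroup (Fin d) ℂ,
      ∀ A, v * T A * vᴴ = T (m * A * mᴴ)) :
    ∃ q ∈ Matrix.unitaryGroup (Fin d) ℂ, ∃ α β : ℂ,
      ∀ A : Mat d, T A = α • (q * A * qᴴ) + (β * A.trace) • (1 : Mat d) := by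
  haveI : NeZero d := ⟨by omega⟩
  have hdpos : 0 < d := by omega
  have h0v : ((0:Fin d):ℕ) = 0 := by simp
  have h1v : ((1:Fin d):ℕ) = 1 := by rw [Fin.val_one']; exact Nat.mod_eq_of_lt (by omega)
  have h01 : (0 : Fin d) ≠ 1 := by
    intro hc
    have h2 := congrArg Fin.val hc
    rw [h0v, h1v] at h2
    omega
  set t : Fin d → Fin d → ℂ := fun i j => T (E d i j) i j with htdef
  set R : Fin d → Fin d → ℂ := fun k a => T (E d a a) k k with hRdef
  -- t is nonzero off the diagonal
  have t_ne : ∀ i j : Fin d, i ≠ j → t i j ≠ 0 := by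
    intro i j hij hzero
    have hTE : T (E d i j) = 0 := by
      ext k l
      by_cases hkl : i = k ∧ j = l
      · obtain ⟨hk, hl⟩ := hkl; subst hk; subst hl
        simpa using hzero
      · rw [hz i j k l (by tauto)]
        simp
    have : E d i j = 0 := by
      have := congrArg T.symm hTE
      simpa using this
    have := congrFun (congrFun this i) j
    rw [E_apply] at this
    simp at this
  -- the off-diagonal basis images
  have TE_smul : ∀ i j : Fin d, i ≠ j → T (E d i j) = t i j • E d i j := by
    intro i j hij
    ext k l
    by_cases hkl : i = k ∧ j = l
    · obtain ⟨hk, hl⟩ := hkl; subst hk; subst hl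
      rw [Matrix.smul_apply, E_apply]
      simp [htdef]
    · rw [hz i j k l (by tauto), Matrix.smul_apply, E_apply, if_neg hkl]
      simp
  have TE_diag : ∀ j : Fin d, T (E d j j) = Matrix.diagonal (fun a => R a j) := by
    intro j
    ext k l
    by_cases hkl : k = l
    · subst hkl
      rw [Matrix.diagonal_apply_eq]
    · rw [hz j j k l (fun hc => by
        rcases hc with ⟨_, h2⟩ | ⟨ha, hb2⟩
        · exact hkl h2
        · exact hkl (ha.symm.trans hb2)), Matrix.diagonal_apply_ne _ hkl]
  -- permutation invariance of R
  have Rconst : ∀ (π : Equiv.Perm (Fin d)) (k a : Fin d), R (π k) (π a) = R k a := by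
    intro π k i
    obtain ⟨m, hmem, hm⟩ := hb (Pmat d π) (Pmat_mem π)
    have hstar : mᴴ * m = 1 := umul' hmem
    -- columns of m are supported at π i
    have colzero : ∀ (i' k' l' : Fin d), k' ≠ l' → m k' i' * (starRingEnd ℂ) (m l' i') = 0 := by
      intro i' k' l' hne
      have h := congrFun (congrFun (hm (E d i' i')) k') l'
      rw [Pmat_conj] at h
      have hπ : π.symm k' ≠ π.symm l' := fun hc => hne (by
        have := congrArg π hc; simpa using this)
      rw [hz i' i' (π.symm k') (π.symm l') (fun hc => by
        rcases hc with ⟨_, h2⟩ | ⟨ha, hb2⟩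
        · exact hπ h2
        · exact hπ (ha.symm.trans hb2))] at h
      rw [entry_off T hz _ hne, conj_std_entry] at h
      rcases mul_eq_zero.mp h.symm with h' | h'
      · exact absurd h' (t_ne _ _ hne)
      · exact h'
    have mcol : ∀ (i' k' : Fin d), k' ≠ π i' → m k' i' = 0 := by
      intro i' k' hne
      -- first: m (π i') i' ≠ 0
      have hnz : m (π i') i' ≠ 0 := by
        set j' : Fin d := if i' = 0 then 1 else 0 with hj'
        have hij' : i' ≠ j' := by
          rw [hj']
          by_cases hc : i' = 0
          · rw [if_pos hc, hc]; exact h01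
          · rw [if_neg hc]; exact hc
        have h := congrFun (congrFun (hm (E d i' j')) (π i')) (π j')
        rw [Pmat_conj, Equiv.symm_apply_apply, Equiv.symm_apply_apply] at h
        have hππ : π i' ≠ π j' := fun hc => hij' (π.injective hc)
        rw [entry_off T hz _ hππ, conj_std_entry] at h
        rw [TE_smul i' j' hij', Matrix.smul_apply, E_apply, if_pos ⟨rfl, rfl⟩, smul_eq_mul,
          mul_one] at h
        intro hc
        rw [hc] at h
        simp at h
        exact t_ne _ _ hij' h
      have := colzero i' k' (π i') hne
      rcases mul_eq_zero.mp this with h' | h'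
      · exact h'
      · exact absurd h' (by
          intro hc
          exact hnz (by simpa using congrArg (starRingEnd ℂ) hc))
    have mnorm : m (π i) i * (starRingEnd ℂ) (m (π i) i) = 1 := by
      have h := congrFun (congrFun hstar i) i
      rw [Matrix.mul_apply] at h
      rw [Finset.sum_eq_single (π i)] at h
      · rw [Matrix.conjTranspose_apply, Matrix.one_apply_eq] at h
        rw [mul_comm] at h
        simpa [Complex.star_def] using h
      · intro a _ ha
        rw [mcol i a ha, mul_zero]
      · intro hk; exact absurd (Finset.mem_univ _) hk
    -- now the R relation
    have h := congrFun (congrFun (hm (E d i i)) (π k)) (π k)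
    rw [Pmat_conj, Equiv.symm_apply_apply] at h
    have hL : (T (E d i i)) k k = R k i := rfl
    rw [hL] at h
    rw [entry_diag T hz] at h
    have hsum : ∑ a, T (E d a a) (π k) (π k) * (m * E d i i * mᴴ) a a = R (π k) (π i) := by
      rw [Finset.sum_eq_single (π i)]
      · rw [conj_std_entry, mnorm, mul_one]
      · intro a _ ha
        rw [conj_std_entry, mcol i a ha, zero_mul, mul_zero]
      · intro hk; exact absurd (Finset.mem_univ _) hk
    rw [hsum] at h
    exact h.symm
  -- R has the form α δ + β
  set β : ℂ := R 0 1 with hβdef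
  set γ : ℂ := R 0 0 with hγdef
  set α : ℂ := γ - β with hαdef
  have Rdiag : ∀ k : Fin d, R k k = γ := by
    intro k
    have hcc := Rconst (Equiv.swap 0 k) 0 0
    rw [Equiv.swap_apply_left] at hcc
    exact hcc
  have Roff : ∀ k a : Fin d, k ≠ a → R k a = β := by
    intro k a hka
    by_cases hk0 : k = 0
    · subst hk0
      by_cases ha1 : a = 1
      · subst ha1; rfl
      · -- use a swap fixing 0 sending 1 to a : swap 1 a (fixes 0 since a ≠ 0, 1 ≠ 0)
        have ha0 : a ≠ 0 := fun hc => hka hc.symm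
        have hcc := Rconst (Equiv.swap 1 a) 0 1
        rw [Equiv.swap_apply_left, Equiv.swap_apply_of_ne_of_ne h01 (fun hc => ha0 hc.symm)]
          at hcc
        exact hcc
    · set τ₁ := Equiv.swap (0:Fin d) k with hτ₁
      set i₁ := τ₁ 1 with hi₁
      set τ₂ := Equiv.swap i₁ a with hτ₂
      set π := τ₁.trans τ₂ with hπ
      have hi₁ne : i₁ ≠ k := by
        rw [hi₁, hτ₁]
        by_cases hk1 : k = 1
        · rw [hk1, Equiv.swap_apply_right]
          exact h01
        · rw [Equiv.swap_apply_of_ne_of_ne (fun hc => h01 hc.symm) (fun hc => hk1 hc.symm)]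
          exact fun hc => hk1 hc.symm
      have hπ0 : π 0 = k := by
        rw [hπ]
        simp only [Equiv.trans_apply]
        rw [hτ₁, Equiv.swap_apply_left, hτ₂,
          Equiv.swap_apply_of_ne_of_ne (fun hc => hi₁ne hc.symm) hka]
      have hπ1 : π 1 = a := by
        rw [hπ]
        simp only [Equiv.trans_apply]
        rw [← hi₁, hτ₂, Equiv.swap_apply_left]
      have hcc := Rconst π 0 1
      rw [hπ0, hπ1] at hcc
      exact hcc
  have Rif : ∀ k a : Fin d, R k a = if k = a then α + β else β := by
    intro k a
    by_cases hka : k = a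
    · subst hka
      rw [if_pos rfl, Rdiag, hαdef]; ring
    · rw [if_neg hka, Roff k a hka]
  -- α ≠ 0
  have αne : α ≠ 0 := by
    intro hα
    have hT0 : T (E d 0 0 - E d 1 1) = 0 := by
      rw [map_sub]
      ext k l
      by_cases hkl : k = l
      · subst hkl
        rw [Matrix.sub_apply, Matrix.zero_apply]
        have h1 : (T (E d 0 0)) k k = R k 0 := rfl
        have h2 : (T (E d 1 1)) k k = R k 1 := rfl
        rw [h1, h2, Rif k 0, Rif k 1, hα]
        split_ifs <;> ring
      · rw [Matrix.sub_apply, Matrix.zero_apply,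
          hz 0 0 k l (fun hc => by
            rcases hc with ⟨_, h2⟩ | ⟨ha, hb2⟩
            · exact hkl h2
            · exact hkl (ha.symm.trans hb2)),
          hz 1 1 k l (fun hc => by
            rcases hc with ⟨_, h2⟩ | ⟨ha, hb2⟩
            · exact hkl h2
            · exact hkl (ha.symm.trans hb2))]
        ring
    have hX : E d 0 0 - E d 1 1 = 0 := T.injective (by rw [hT0, map_zero])
    have hcontra := congrFun (congrFun hX 0) 0
    rw [Matrix.sub_apply, E_apply, E_apply] at hcontra
    simp [Ne.symm h01] at hcontra
  -- sum helper
  have sumIf : ∀ (x : Fin d → ℂ) (c : Fin d),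
      ∑ a, (if c = a then α + β else β) * x a = α * x c + β * ∑ a, x a := by
    intro x c
    have hterm : ∀ a : Fin d, (if c = a then α + β else β) * x a
        = (if c = a then α * x a else 0) + β * x a := by
      intro a; split_ifs <;> ring
    rw [Finset.sum_congr rfl (fun a _ => hterm a), Finset.sum_add_distrib,
      Finset.sum_ite_eq Finset.univ c (fun a => α * x a), if_pos (Finset.mem_univ c),
      ← Finset.mul_sum]
  have Rif' : ∀ a j : Fin d, R a j = if j = a then α + β else β := by
    intro a j
    rw [Rif a j]
    by_cases hc : a = j
    · subst hc; simp
    · rw [if_neg hc, if_neg (fun h2 => hc h2.symm)]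
  -- Fourier step
  obtain ⟨m, hmem, hm⟩ := hb (Fou d) (Fou_mem hdpos)
  have hstar : mᴴ * m = 1 := umul' hmem
  have hFstar : Fou d * (Fou d)ᴴ = 1 := umul (Fou_mem hdpos)
  have morth : ∀ i j : Fin d, i ≠ j → ∑ a, m a i * (starRingEnd ℂ) (m a j) = 0 := by
    intro i j hij
    have h := congrFun (congrFun hstar j) i
    rw [Matrix.mul_apply, Matrix.one_apply_ne (fun hc => hij hc.symm)] at h
    rw [← h]
    apply Finset.sum_congr rfl
    intro a _
    rw [Matrix.conjTranspose_apply, Complex.star_def]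
    ring
  have Forth : ∑ a, Fou d 0 a * (starRingEnd ℂ) (Fou d 1 a) = 0 := by
    have h := congrFun (congrFun hFstar 0) 1
    rw [Matrix.mul_apply, Matrix.one_apply_ne h01] at h
    rw [← h]
    apply Finset.sum_congr rfl
    intro a _
    rw [Matrix.conjTranspose_apply, Complex.star_def]
  have smul_move : ∀ (c : ℂ) (X : Mat d), Fou d * (c • X) * (Fou d)ᴴ = c • (Fou d * X * (Fou d)ᴴ) := by
    intro c X
    rw [Matrix.mul_smul, Matrix.smul_mul]
  have e1 : ∀ i j k l : Fin d, i ≠ j → k ≠ l →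
      t i j * (Fou d k i * (starRingEnd ℂ) (Fou d l j))
        = t k l * (m k i * (starRingEnd ℂ) (m l j)) := by
    intro i j k l hij hkl
    have h := congrFun (congrFun (hm (E d i j)) k) l
    rw [entry_off T hz _ hkl, conj_std_entry] at h
    rw [TE_smul i j hij, smul_move, Matrix.smul_apply, conj_std_entry, smul_eq_mul] at h
    exact h
  have e2 : ∀ i j k : Fin d, i ≠ j →
      t i j * (Fou d k i * (starRingEnd ℂ) (Fou d k j))
        = α * (m k i * (starRingEnd ℂ) (m k j)) := by
    intro i j k hij
    have h := congrFun (congrFun (hm (E d i j)) k) k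
    rw [entry_diag T hz] at h
    rw [TE_smul i j hij, smul_move, Matrix.smul_apply, conj_std_entry, smul_eq_mul] at h
    have hsum : ∑ a, T (E d a a) k k * (m * E d i j * mᴴ) a a
        = α * (m k i * (starRingEnd ℂ) (m k j)) := by
      have hterm : ∀ a : Fin d, T (E d a a) k k * (m * E d i j * mᴴ) a a
          = (if k = a then α + β else β) * (m a i * (starRingEnd ℂ) (m a j)) := by
        intro a
        rw [conj_std_entry]
        congr 1
        exact Rif k a
      rw [Finset.sum_congr rfl (fun a _ => hterm a), sumIf, morth i j hij, mul_zero, add_zero]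
    rw [hsum] at h
    exact h
  have e3 : ∀ j : Fin d, α * (Fou d 0 j * (starRingEnd ℂ) (Fou d 1 j))
      = t 0 1 * (m 0 j * (starRingEnd ℂ) (m 1 j)) := by
    intro j
    have h := congrFun (congrFun (hm (E d j j)) 0) 1
    rw [entry_off T hz _ h01, conj_std_entry] at h
    rw [TE_diag j] at h
    have hL : (Fou d * Matrix.diagonal (fun a => R a j) * (Fou d)ᴴ) 0 1
        = ∑ a, (if j = a then α + β else β) * (Fou d 0 a * (starRingEnd ℂ) (Fou d 1 a)) := by
      rw [Matrix.mul_apply]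
      apply Finset.sum_congr rfl
      intro a _
      rw [Matrix.mul_diagonal, Matrix.conjTranspose_apply, Complex.star_def, ← Rif' a j]
      ring
    rw [hL, sumIf, Forth, mul_zero, add_zero] at h
    exact h
  -- modulus of the first row of m
  have hmod : ∀ j : Fin d, m 0 j * (starRingEnd ℂ) (m 0 j) = cF d * cF d := by
    intro j
    set i : Fin d := if j = 0 then 1 else 0 with hidef
    have hij : i ≠ j := by
      rw [hidef]
      by_cases hc : j = 0
      · rw [if_pos hc, hc]; exact Ne.symm h01
      · rw [if_neg hc]; exact fun h2 => hc h2.symm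
    have I := e2 i j 0 hij
    have II := e3 j
    have III := e1 i j 0 1 hij h01
    have hc : α * (t i j * (Fou d 0 i * (starRingEnd ℂ) (Fou d 1 j))) ≠ 0 :=
      mul_ne_zero αne (mul_ne_zero (t_ne _ _ hij)
        (mul_ne_zero (Fou_ne_zero hdpos 0 i) (conj_ne (Fou_ne_zero hdpos 1 j))))
    have main : α * (t i j * (Fou d 0 i * (starRingEnd ℂ) (Fou d 1 j)))
          * (Fou d 0 j * (starRingEnd ℂ) (Fou d 0 j))
        = α * (t i j * (Fou d 0 i * (starRingEnd ℂ) (Fou d 1 j)))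
          * (m 0 j * (starRingEnd ℂ) (m 0 j)) := by
      calc α * (t i j * (Fou d 0 i * (starRingEnd ℂ) (Fou d 1 j)))
            * (Fou d 0 j * (starRingEnd ℂ) (Fou d 0 j))
          = (t i j * (Fou d 0 i * (starRingEnd ℂ) (Fou d 0 j)))
            * (α * (Fou d 0 j * (starRingEnd ℂ) (Fou d 1 j))) := by ring
        _ = (α * (m 0 i * (starRingEnd ℂ) (m 0 j)))
            * (t 0 1 * (m 0 j * (starRingEnd ℂ) (m 1 j))) := by rw [I, II]
        _ = (t 0 1 * (m 0 i * (starRingEnd ℂ) (m 1 j)))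
            * (α * (m 0 j * (starRingEnd ℂ) (m 0 j))) := by ring
        _ = (t i j * (Fou d 0 i * (starRingEnd ℂ) (Fou d 1 j)))
            * (α * (m 0 j * (starRingEnd ℂ) (m 0 j))) := by rw [← III]
        _ = α * (t i j * (Fou d 0 i * (starRingEnd ℂ) (Fou d 1 j)))
            * (m 0 j * (starRingEnd ℂ) (m 0 j)) := by ring
    have hcancel := mul_left_cancel₀ hc main
    rw [← hcancel, Fou_row0 0 j h0v, cF_conj]
  have hcF2 : cF d * cF d ≠ 0 := mul_ne_zero (cF_ne hdpos) (cF_ne hdpos)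
  set G : Fin d → ℂ := fun i => (cF d)⁻¹ * m 0 i with hGdef
  have hGunit : ∀ i, G i * (starRingEnd ℂ) (G i) = 1 := by
    intro i
    rw [hGdef]
    simp only [_root_.map_mul, map_inv₀, cF_conj]
    rw [show (cF d)⁻¹ * m 0 i * ((cF d)⁻¹ * (starRingEnd ℂ) (m 0 i))
        = (cF d * cF d)⁻¹ * (m 0 i * (starRingEnd ℂ) (m 0 i)) from by
      rw [mul_inv]; ring, hmod]
    exact inv_mul_cancel₀ hcF2
  have ht : ∀ i j : Fin d, i ≠ j → t i j = α * (G i * (starRingEnd ℂ) (G j)) := by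
    intro i j hij
    have I := e2 i j 0 hij
    rw [Fou_row0 0 i h0v, Fou_row0 0 j h0v, cF_conj] at I
    have hstep : t i j = (cF d * cF d)⁻¹ * (t i j * (cF d * cF d)) := by
      rw [mul_comm (t i j), inv_mul_cancel_left₀ hcF2]
    rw [hstep, show t i j * (cF d * cF d) = t i j * (cF d * cF d) from rfl]
    rw [show t i j * (cF d * cF d) = α * (m 0 i * (starRingEnd ℂ) (m 0 j)) from by
      rw [← I]]
    rw [hGdef]
    simp only [_root_.map_mul, map_inv₀, cF_conj]
    rw [mul_inv]
    ring
  -- conclusion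
  refine ⟨Matrix.diagonal G, ?_, α, β, ?_⟩
  · rw [Matrix.mem_unitaryGroup_iff, Matrix.star_eq_conjTranspose,
      Matrix.diagonal_conjTranspose, Matrix.diagonal_mul_diagonal]
    ext k l
    by_cases hkl : k = l
    · subst hkl
      rw [Matrix.diagonal_apply_eq, Matrix.one_apply_eq]
      have := hGunit k
      simpa [Complex.star_def] using this
    · rw [Matrix.diagonal_apply_ne _ hkl, Matrix.one_apply_ne hkl]
  · intro A
    ext k l
    rw [Matrix.add_apply, Matrix.smul_apply, Matrix.smul_apply, smul_eq_mul, smul_eq_mul,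
      diag_sandwich G A k l]
    by_cases hkl : k = l
    · subst hkl
      rw [entry_diag T hz, Matrix.one_apply_eq]
      have hterm : ∀ a : Fin d, T (E d a a) k k * A a a
          = (if k = a then α + β else β) * A a a := by
        intro a
        congr 1
        exact Rif k a
      rw [Finset.sum_congr rfl (fun a _ => hterm a), sumIf]
      have htr : A.trace = ∑ a, A a a := by
        simp [Matrix.trace, Matrix.diag]
      rw [htr, show G k * A k k * (starRingEnd ℂ) (G k)
          = (G k * (starRingEnd ℂ) (G k)) * A k k from by ring, hGunit k]
      ring
    · rw [entry_off T hz _ hkl, Matrix.one_apply_ne hkl]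
      rw [show T (E d k l) k l = t k l from rfl, ht k l hkl]
      ring

end SSA

namespace SSA
variable {d : ℕ}

lemma cancel_left {u : Mat d} (hu : uᴴ * u = 1) (X : Mat d) : uᴴ * (u * X) = X := by
  rw [← Matrix.mul_assoc, hu, Matrix.one_mul]

lemma cancel_left' {u : Mat d} (hu : u * uᴴ = 1) (X : Mat d) : u * (uᴴ * X) = X := by
  rw [← Matrix.mul_assoc, hu, Matrix.one_mul]

lemma diag_mem (G : Fin d → ℂ) (h : ∀ k, G k * (starRingEnd ℂ) (G k) = 1) :
    Matrix.diagonal G ∈ Matrix.unitaryGroup (Fin d) ℂ := by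
  rw [Matrix.mem_unitaryGroup_iff, Matrix.star_eq_conjTranspose,
    Matrix.diagonal_conjTranspose, Matrix.diagonal_mul_diagonal]
  ext k l
  by_cases hkl : k = l
  · subst hkl
    rw [Matrix.diagonal_apply_eq, Matrix.one_apply_eq]
    simpa [Complex.star_def] using h k
  · rw [Matrix.diagonal_apply_ne _ hkl, Matrix.one_apply_ne hkl]

/-- conjugation as a linear map -/
def AdL (v : Mat d) : Mat d →ₗ[ℂ] Mat d where
  toFun A := v * A * vᴴ
  map_add' A B := by
    show v * (A + B) * vᴴ = v * A * vᴴ + v * B * vᴴ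
    rw [Matrix.mul_add, Matrix.add_mul]
  map_smul' c A := by
    show v * (c • A) * vᴴ = c • (v * A * vᴴ)
    rw [Matrix.mul_smul, Matrix.smul_mul]

lemma AdL_apply (v A : Mat d) : AdL v A = v * A * vᴴ := rfl

lemma AdL_mem {v : Mat d} (hv : v ∈ Matrix.unitaryGroup (Fin d) ℂ) :
    AdL v ∈ UniMapSet d := ⟨v, hv, fun _ => rfl⟩

/-- `Sfwd` as a linear equivalence -/
def SEquiv (u : Mat d) (hu : u ∈ Matrix.unitaryGroup (Fin d) ℂ) (b : Bool) :
    Mat d ≃ₗ[ℂ] Mat d where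
  toFun := Sfwd u b
  invFun := Sinv u b
  map_add' A B := by
    cases b <;> simp [Sfwd, Matrix.transpose_add, Matrix.mul_add, Matrix.add_mul]
  map_smul' c A := by
    cases b <;> simp [Sfwd, Matrix.transpose_smul, Matrix.smul_mul, Matrix.mul_smul]
  left_inv A := Sinv_Sfwd hu b A
  right_inv A := Sfwd_Sinv hu b A

lemma Sconj (u v : Mat d) (b : Bool) (A : Mat d) :
    Sinv u b (v * (Sfwd u b A) * vᴴ)
      = (if b then ((uᴴ*v*u)ᴴ)ᵀ else uᴴ*v*u) * A
        * ((if b then ((uᴴ*v*u)ᴴ)ᵀ else uᴴ*v*u))ᴴ := by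
  cases b
  · simp only [Sfwd, Sinv, if_neg, Bool.false_eq_true, not_false_iff, ite_false]
    rw [Matrix.conjTranspose_mul, Matrix.conjTranspose_mul, Matrix.conjTranspose_conjTranspose]
    simp only [Matrix.mul_assoc]
  · simp only [Sfwd, Sinv, ite_true]
    rw [ct_t, Matrix.conjTranspose_conjTranspose]
    rw [show (uᴴ * (v * (u * Aᵀ * uᴴ) * vᴴ) * u) = (uᴴ*v*u) * Aᵀ * ((uᴴ*v*u))ᴴ from by
      rw [Matrix.conjTranspose_mul, Matrix.conjTranspose_mul,
        Matrix.conjTranspose_conjTranspose]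
      simp only [Matrix.mul_assoc]]
    rw [Matrix.transpose_mul, Matrix.transpose_mul, Matrix.transpose_transpose]
    simp only [Matrix.mul_assoc]

end SSA


open SSA in
/-- Lemma A4: if for every `𝓤 ∈ 𝕌` there is some `𝓢_𝓤 ∈ 𝕊` (depending
on `𝓤`) with `T⁻¹∘𝓤∘T = 𝓢_𝓤⁻¹∘𝓤∘𝓢_𝓤`, then a single `𝓢 ∈ 𝕊` works for all
`𝓤 ∈ 𝕌`. -/
theorem single_symmetry_transformation {d : ℕ} (hd : 2 ≤ d)
    (T : Mat d ≃ₗ[ℂ] Mat d)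
    (h : ∀ U ∈ UniMapSet d, ∃ u ∈ Matrix.unitaryGroup (Fin d) ℂ, ∃ anti : Bool,
      ∀ A, T.symm (U (T A)) = Sinv u anti (U (Sfwd u anti A))) :
    ∃ u ∈ Matrix.unitaryGroup (Fin d) ℂ, ∃ anti : Bool,
      ∀ U ∈ UniMapSet d, ∀ A, T.symm (U (T A)) = Sinv u anti (U (Sfwd u anti A)) := by
  haveI : NeZero d := ⟨by omega⟩
  classical
  set D : Mat d := Matrix.diagonal (lamgen d) with hDdef
  have hDmem : D ∈ Matrix.unitaryGroup (Fin d) ℂ := diag_mem _ (lamgen_unit d)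
  obtain ⟨u₀, hu₀, b₀, hb₀⟩ := h (AdL D) (AdL_mem hDmem)
  simp only [AdL_apply] at hb₀
  set T' : Mat d ≃ₗ[ℂ] Mat d := (SEquiv u₀ hu₀ b₀).symm.trans T with hT'def
  have hT'app : ∀ A, T' A = T (Sinv u₀ b₀ A) := fun A => rfl
  have hT'symm : ∀ A, T'.symm A = Sfwd u₀ b₀ (T.symm A) := fun A => rfl
  -- (a') commutation with conjugation by D
  have ha : ∀ B, D * T' B * Dᴴ = T' (D * B * Dᴴ) := by
    intro B
    have h1 := hb₀ (Sinv u₀ b₀ B)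
    rw [Sfwd_Sinv hu₀] at h1
    have h2 := congrArg T h1
    rw [LinearEquiv.apply_symm_apply] at h2
    rw [hT'app, hT'app]
    exact h2
  -- structure lemma input
  have hz := struct_zero T' (lamgen d) (lamgen_gen d)
    (by intro A; rw [← hDdef]; exact ha A)
  -- (b')
  have hb' : ∀ v ∈ Matrix.unitaryGroup (Fin d) ℂ, ∃ m ∈ Matrix.unitaryGroup (Fin d) ℂ,
      ∀ A, v * T' A * vᴴ = T' (m * A * mᴴ) := by
    intro v hv
    obtain ⟨u, hu, b, hbv⟩ := h (AdL v) (AdL_mem hv)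
    simp only [AdL_apply] at hbv
    set w : Mat d := uᴴ * v * u with hwdef
    have hw : w ∈ Matrix.unitaryGroup (Fin d) ℂ := mul_mem (mul_mem (star_mem hu) hv) hu
    set mv : Mat d := if b then ((w)ᴴ)ᵀ else w with hmvdef
    have hmv : mv ∈ Matrix.unitaryGroup (Fin d) ℂ := by
      rw [hmvdef]
      cases b
      · simpa using hw
      · simpa using transpose_mem (star_mem hw)
    have hred : ∀ A, T.symm (v * T A * vᴴ) = mv * A * mvᴴ := by
      intro A
      rw [hbv A, Sconj]
    set m' : Mat d := if b₀ then u₀ * (mvᴴ)ᵀ * u₀ᴴ else u₀ * mv * u₀ᴴ with hm'def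
    have hm' : m' ∈ Matrix.unitaryGroup (Fin d) ℂ := by
      rw [hm'def]
      cases b₀
      · simpa using mul_mem (mul_mem hu₀ hmv) (star_mem hu₀)
      · simpa using mul_mem (mul_mem hu₀ (transpose_mem (star_mem hmv))) (star_mem hu₀)
    have hkey : ∀ A, Sinv u₀ b₀ (m' * A * m'ᴴ) = mv * (Sinv u₀ b₀ A) * mvᴴ := by
      intro A
      rw [hm'def]
      cases b₀
      · simp only [ite_false, Bool.false_eq_true, if_neg, not_false_iff, Sinv]
        rw [Matrix.conjTranspose_mul, Matrix.conjTranspose_mul,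
          Matrix.conjTranspose_conjTranspose]
        simp only [Matrix.mul_assoc]
        rw [cancel_left (umul' hu₀)]
        simp only [umul' hu₀, Matrix.mul_one]
      · simp only [ite_true, Sinv]
        rw [Matrix.conjTranspose_mul, Matrix.conjTranspose_mul, ct_t,
          Matrix.conjTranspose_conjTranspose, Matrix.conjTranspose_conjTranspose]
        have hinner : u₀ᴴ * (u₀ * mvᴴᵀ * u₀ᴴ * A * (u₀ * (mvᵀ * u₀ᴴ))) * u₀
            = mvᴴᵀ * ((u₀ᴴ * (A * u₀)) * mvᵀ) := by
          simp only [Matrix.mul_assoc]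
          rw [cancel_left (umul' hu₀)]
          simp only [umul' hu₀, Matrix.mul_one]
        rw [hinner]
        simp only [Matrix.transpose_mul, Matrix.transpose_transpose, Matrix.mul_assoc]
    refine ⟨m', hm', fun A => ?_⟩
    calc v * T' A * vᴴ
        = T (T.symm (v * T (Sinv u₀ b₀ A) * vᴴ)) := by
          rw [LinearEquiv.apply_symm_apply, hT'app]
      _ = T (mv * (Sinv u₀ b₀ A) * mvᴴ) := by rw [hred]
      _ = T (Sinv u₀ b₀ (m' * A * m'ᴴ)) := by rw [hkey]
      _ = T' (m' * A * m'ᴴ) := (hT'app _).symm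
  -- apply the key lemma
  obtain ⟨q, hq, α, β, hT'⟩ := key hd T' hz hb'
  have hqu : q * u₀ ∈ Matrix.unitaryGroup (Fin d) ℂ := mul_mem hq hu₀
  -- final form of T
  have hTfin : ∀ A : Mat d, T A = α • Sfwd (q * u₀) b₀ A + (β * A.trace) • (1 : Mat d) := by
    intro A
    have h1 : T A = T' (Sfwd u₀ b₀ A) := by rw [hT'app, Sinv_Sfwd hu₀]
    rw [h1, hT' (Sfwd u₀ b₀ A), trace_Sfwd hu₀]
    congr 2
    cases b₀
    · simp only [Sfwd, ite_false, Bool.false_eq_true, if_neg, not_false_iff]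
      rw [Matrix.conjTranspose_mul]
      simp only [Matrix.mul_assoc]
    · simp only [Sfwd, ite_true]
      rw [Matrix.conjTranspose_mul]
      simp only [Matrix.mul_assoc]
  refine ⟨q * u₀, hqu, b₀, ?_⟩
  intro U hU A
  obtain ⟨v, hv, hUv⟩ := hU
  rw [hUv, hUv]
  apply T.injective
  rw [LinearEquiv.apply_symm_apply]
  rw [hTfin (Sinv (q * u₀) b₀ (v * Sfwd (q * u₀) b₀ A * vᴴ))]
  rw [Sfwd_Sinv hqu, trace_Sinv hqu, trace_conj hv, trace_Sfwd hqu]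
  rw [hTfin A]
  rw [Matrix.mul_add, Matrix.add_mul, Matrix.mul_smul, Matrix.smul_mul, Matrix.mul_smul,
    Matrix.smul_mul, Matrix.mul_one, umul hv]
end
end

section
/- Let D be a trace-preserving linear map on d×d complex matrices. Then D commutes with every unitary map, i.e. D(uAu†) = u D(A) u† for every unitary matrix u and every matrix A, if and only if D is a depolarising map, i.e. there exists a scalar F such that D(A) = F·A + (1−F)·(Tr(A)/d)·I for all A. -/
open Matrix

private lemma cancel_scalar {x y M : ℂ} (h : x * M = y * M) (hxy : x ≠ y) : M = 0 := by
  have h0 : (x - y) * M = 0 := by linear_combination h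
  rcases mul_eq_zero.1 h0 with h' | h'
  · exact absurd (sub_eq_zero.1 h') hxy
  · exact h'

private lemma std_conjTranspose {n : Type*} [DecidableEq n] (i j : n) (c : ℂ) :
    (Matrix.single i j c)ᴴ = Matrix.single j i (star c) := by
  ext k l
  simp only [conjTranspose_apply, Matrix.single, of_apply]
  by_cases h1 : j = k <;> by_cases h2 : i = l <;> simp [h1, h2]

private lemma diag_mem {n : Type*} [Fintype n] [DecidableEq n] (z : n → ℂ)
    (hz : ∀ m, z m * star (z m) = 1) : diagonal z ∈ Matrix.unitaryGroup n ℂ := by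
  rw [Matrix.mem_unitaryGroup_iff]
  show diagonal z * (diagonal z)ᴴ = 1
  rw [Matrix.diagonal_conjTranspose, diagonal_mul_diagonal]
  have : (fun i => z i * star z i) = fun _ => (1:ℂ) := funext fun m => hz m
  rw [this]
  exact diagonal_one

private lemma zI_unit {n : Type*} [DecidableEq n] (t : n) :
    ∀ m, (if m = t then Complex.I else 1) * star (if m = t then Complex.I else 1) = 1 := by
  intro m
  by_cases h : m = t <;> simp [h, Complex.conj_I]

private lemma perm_mem {n : Type*} [Fintype n] [DecidableEq n] (σ : Equiv.Perm n) :
    (σ.toPEquiv.toMatrix : Matrix n n ℂ) ∈ Matrix.unitaryGroup n ℂ := by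
  rw [Matrix.mem_unitaryGroup_iff]
  show _ * _ᴴ = 1
  have h1 : ((σ.toPEquiv.toMatrix : Matrix n n ℂ))ᴴ = (σ.symm.toPEquiv.toMatrix : Matrix n n ℂ) := by
    ext k l
    simp [conjTranspose_apply, PEquiv.toMatrix_apply, Equiv.toPEquiv_apply, apply_ite,
      eq_comm, Equiv.eq_symm_apply]
  rw [h1, ← PEquiv.toMatrix_trans, ← Equiv.toPEquiv_trans]
  simp

private lemma pair_perm {n : Type*} [DecidableEq n] {i j k l : n} (hij : i ≠ j) (hkl : k ≠ l) :
    ∃ σ : Equiv.Perm n, σ i = k ∧ σ j = l := by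
  refine ⟨(Equiv.swap i k).trans (Equiv.swap ((Equiv.swap i k) j) l), ?_, ?_⟩
  · rw [Equiv.trans_apply, Equiv.swap_apply_left]
    apply Equiv.swap_apply_of_ne_of_ne _ hkl
    intro hh
    exact hij (Equiv.injective _ (by rw [Equiv.swap_apply_left, ← hh]))
  · rw [Equiv.trans_apply, Equiv.swap_apply_left]

section Main

variable {d : ℕ} (D : Matrix (Fin d) (Fin d) ℂ →ₗ[ℂ] Matrix (Fin d) (Fin d) ℂ)

private lemma vanish_lemmas
    (h : ∀ u ∈ Matrix.unitaryGroup (Fin d) ℂ, ∀ A, D (u * A * uᴴ) = u * D A * uᴴ) :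
    (∀ i j k l : Fin d, i ≠ j → ¬(i = k ∧ j = l) → (D (Matrix.single i j 1)) k l = 0) ∧
    (∀ i k l : Fin d, k ≠ l → (D (Matrix.single i i 1)) k l = 0) := by

  have phase : ∀ (z : Fin d → ℂ), (∀ m, z m * star (z m) = 1) → ∀ i j k l : Fin d,
      z i * star (z j) * (D (Matrix.single i j 1)) k l
        = z k * ((D (Matrix.single i j 1)) k l) * star (z l) := by
    intro z hz i j k l
    have harg : diagonal z * Matrix.single i j (1:ℂ) * (diagonal z)ᴴ
        = (z i * star (z j)) • Matrix.single i j (1:ℂ) := by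
      rw [Matrix.diagonal_conjTranspose]
      ext k' l'
      rw [Matrix.mul_diagonal, Matrix.diagonal_mul, Matrix.smul_apply]
      by_cases h1 : i = k' <;> by_cases h2 : j = l' <;>
        simp [Matrix.single, h1, h2, Pi.star_apply] <;> ring
    have key := h (diagonal z) (diag_mem z hz) (Matrix.single i j 1)
    rw [harg, _root_.map_smul] at key
    have e := congrFun (congrFun key k) l
    rw [Matrix.smul_apply, smul_eq_mul, Matrix.diagonal_conjTranspose,
      Matrix.mul_diagonal, Matrix.diagonal_mul] at e
    simpa using e
  have hIne1 : Complex.I ≠ 1 := by norm_num [Complex.ext_iff]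
  have hnIneI : -Complex.I ≠ Complex.I := by norm_num [Complex.ext_iff]
  have h1neI : (1:ℂ) ≠ Complex.I := hIne1.symm
  have h1nenI : (1:ℂ) ≠ -Complex.I := by norm_num [Complex.ext_iff]
  have vanish2 : ∀ i k l : Fin d, k ≠ l → (D (Matrix.single i i 1)) k l = 0 := by
    intro i k l hkl
    have hp := phase (fun m => if m = k then Complex.I else 1) (zI_unit k) i i k l
    rw [zI_unit k i] at hp
    simp only [if_pos rfl, eq_self_iff_true, if_true, if_neg (Ne.symm hkl), star_one,
      one_mul, mul_one] at hp
    exact cancel_scalar (show (1:ℂ) * _ = Complex.I * _ by linear_combination hp) h1neI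
  have vanish1 : ∀ i j k l : Fin d, i ≠ j → ¬(i = k ∧ j = l) →
      (D (Matrix.single i j 1)) k l = 0 := by
    intro i j k l hij hne
    by_cases hkl : k = l
    · subst hkl
      have hp := phase (fun m => if m = i then Complex.I else 1) (zI_unit i) i j k k
      rw [show (fun m => if m = i then Complex.I else 1) k *
          ((D (Matrix.single i j 1)) k k) *
          star ((fun m => if m = i then Complex.I else 1) k)
          = ((if k = i then Complex.I else 1) * star (if k = i then Complex.I else 1))
            * (D (Matrix.single i j 1)) k k from by ring] at hp
      rw [zI_unit i k] at hp
      simp only [if_pos rfl, eq_self_iff_true, if_true, if_neg (Ne.symm hij), star_one,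
        mul_one, one_mul] at hp
      exact cancel_scalar (show Complex.I * _ = (1:ℂ) * _ by linear_combination hp) hIne1
    · by_cases hki : k = i
      · subst hki
        have hjl : j ≠ l := fun hh => hne ⟨rfl, hh⟩
        have hp := phase (fun m => if m = l then Complex.I else 1) (zI_unit l) k j k l
        simp only [if_pos rfl, eq_self_iff_true, if_true, if_neg hkl, if_neg hjl, star_one,
          Complex.star_def, Complex.conj_I, one_mul, mul_one] at hp
        exact cancel_scalar
          (show (1:ℂ) * _ = -Complex.I * _ by linear_combination hp) h1nenI
      · have hp := phase (fun m => if m = k then Complex.I else 1) (zI_unit k) i j k l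
        have hik : ¬ i = k := fun hh => hki hh.symm
        by_cases hjk : j = k
        · simp only [if_pos hjk, if_neg hik, if_neg (Ne.symm hkl), if_pos rfl,
            eq_self_iff_true, if_true, star_one, Complex.star_def, Complex.conj_I,
            one_mul, mul_one] at hp
          exact cancel_scalar
            (show -Complex.I * _ = Complex.I * _ by linear_combination hp) hnIneI
        · simp only [if_neg hik, if_neg hjk, if_neg (Ne.symm hkl), if_pos rfl,
            eq_self_iff_true, if_true, star_one, one_mul, mul_one] at hp
          exact cancel_scalar
            (show (1:ℂ) * _ = Complex.I * _ by linear_combination hp) h1neI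
  exact ⟨vanish1, vanish2⟩

private lemma permstep_lemma
    (h : ∀ u ∈ Matrix.unitaryGroup (Fin d) ℂ, ∀ A, D (u * A * uᴴ) = u * D A * uᴴ) :
    ∀ (σ : Equiv.Perm (Fin d)) (i j k l : Fin d),
      (D (Matrix.single (σ i) (σ j) 1)) (σ k) (σ l) = (D (Matrix.single i j 1)) k l := by

  have permstep : ∀ (σ : Equiv.Perm (Fin d)) (i j k l : Fin d),
      (D (Matrix.single (σ i) (σ j) 1)) (σ k) (σ l) = (D (Matrix.single i j 1)) k l := by
    intro σ i j k l
    have hPH : ((σ.toPEquiv.toMatrix : Matrix (Fin d) (Fin d) ℂ))ᴴ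
        = (σ.symm.toPEquiv.toMatrix : Matrix (Fin d) (Fin d) ℂ) := by
      ext k' l'
      simp [conjTranspose_apply, PEquiv.toMatrix_apply, Equiv.toPEquiv_apply, apply_ite,
        eq_comm, Equiv.eq_symm_apply]
    have key := h (σ.toPEquiv.toMatrix) (perm_mem σ) (Matrix.single (σ i) (σ j) 1)
    rw [hPH, PEquiv.toMatrix_toPEquiv_mul] at key
    rw [show ((Matrix.single (σ i) (σ j) (1:ℂ)).submatrix σ id) * σ.symm.toPEquiv.toMatrix
        = ((Matrix.single (σ i) (σ j) (1:ℂ)).submatrix σ id).submatrix id σ.symm.symm from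
      PEquiv.mul_toMatrix_toPEquiv _ σ.symm] at key
    have harg : ((Matrix.single (σ i) (σ j) (1:ℂ)).submatrix σ id).submatrix id σ.symm.symm
        = Matrix.single i j (1:ℂ) := by
      ext a b
      simp [Matrix.submatrix_apply, Matrix.single]
    rw [harg] at key
    have e := congrFun (congrFun key k) l
    rw [e]
    rw [PEquiv.toMatrix_toPEquiv_mul,
      show (D (Matrix.single (σ i) (σ j) 1)).submatrix σ id * σ.symm.toPEquiv.toMatrix
        = ((D (Matrix.single (σ i) (σ j) 1)).submatrix σ id).submatrix id σ.symm.symm from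
      PEquiv.mul_toMatrix_toPEquiv _ σ.symm]
    simp [Matrix.submatrix_apply]
  exact permstep

private lemma heq_lemma [NeZero d] (hd : 2 ≤ d)
    (h : ∀ u ∈ Matrix.unitaryGroup (Fin d) ℂ, ∀ A, D (u * A * uᴴ) = u * D A * uᴴ)
    (vanish1 : ∀ i j k l : Fin d, i ≠ j → ¬(i = k ∧ j = l) → (D (Matrix.single i j 1)) k l = 0)
    (vanish2 : ∀ i k l : Fin d, k ≠ l → (D (Matrix.single i i 1)) k l = 0) :
    (D (Matrix.single (0:Fin d) 1 1)) 0 1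
      = (D (Matrix.single (0:Fin d) 0 1)) 0 0 - (D (Matrix.single (0:Fin d) 0 1)) 1 1 := by

  have h01 : (0 : Fin d) ≠ 1 := by
    intro hh
    have := congrArg Fin.val hh
    simp [Fin.val_one'] at this
    omega
  have h10 : (1 : Fin d) ≠ 0 := h01.symm
  set u : Matrix (Fin d) (Fin d) ℂ :=
    Matrix.single 0 0 (-(2/5) : ℂ) + Matrix.single 0 1 (4/5 : ℂ)
      + Matrix.single 1 0 (4/5 : ℂ) + Matrix.single 1 1 (-(8/5) : ℂ) + 1 with hu_def
  have entry_eval : ∀ (X Y : Matrix (Fin d) (Fin d) ℂ),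
      (∀ a b : Fin d, X a b = Y a b) → X = Y := fun X Y hXY => by ext a b; exact hXY a b
  have huH : uᴴ = u := by
    rw [hu_def]
    simp only [conjTranspose_add, conjTranspose_one, std_conjTranspose]
    norm_num
    abel
  have hu_mem : u ∈ Matrix.unitaryGroup (Fin d) ℂ := by
    rw [Matrix.mem_unitaryGroup_iff, Matrix.star_eq_conjTranspose, huH, hu_def]
    simp only [add_mul, mul_add, one_mul, mul_one, single_mul_single_same,
      single_mul_single_of_ne, h01, h10, ne_eq, not_false_eq_true]
    apply entry_eval
    intro a b
    by_cases ha0 : a = 0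
    · subst ha0
      by_cases hb0 : b = 0
      · subst hb0; simp [Matrix.add_apply, Matrix.one_apply, h01, h10]; norm_num
      · by_cases hb1 : b = 1
        · subst hb1; simp [Matrix.add_apply, Matrix.one_apply, h01, h10]; norm_num
        · have h0b : ¬(0 : Fin d) = b := fun hh => hb0 hh.symm
          have h1b : ¬(1 : Fin d) = b := fun hh => hb1 hh.symm
          simp [Matrix.add_apply, Matrix.one_apply, h01, h10, h0b, h1b, hb0, hb1]
    · by_cases ha1 : a = 1
      · subst ha1
        by_cases hb0 : b = 0
        · subst hb0; simp [Matrix.add_apply, Matrix.one_apply, h01, h10]; norm_num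
        · by_cases hb1 : b = 1
          · subst hb1; simp [Matrix.add_apply, Matrix.one_apply, h01, h10]; norm_num
          · have h0b : ¬(0 : Fin d) = b := fun hh => hb0 hh.symm
            have h1b : ¬(1 : Fin d) = b := fun hh => hb1 hh.symm
            simp [Matrix.add_apply, Matrix.one_apply, h01, h10, h0b, h1b, hb0, hb1]
      · have h0a : ¬(0 : Fin d) = a := fun hh => ha0 hh.symm
        have h1a : ¬(1 : Fin d) = a := fun hh => ha1 hh.symm
        simp [Matrix.add_apply, Matrix.one_apply, h0a, h1a, ha0, ha1]
  have C1 : u * Matrix.single 0 0 (1:ℂ) * uᴴ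
      = Matrix.single 0 0 (9/25 : ℂ) + Matrix.single 0 1 (12/25 : ℂ)
        + Matrix.single 1 0 (12/25 : ℂ) + Matrix.single 1 1 (16/25 : ℂ) := by
    rw [huH, hu_def]
    simp only [add_mul, mul_add, one_mul, mul_one, single_mul_single_same,
      single_mul_single_of_ne, h01, h10, ne_eq, not_false_eq_true]
    apply entry_eval
    intro a b
    by_cases ha0 : a = 0
    · subst ha0
      by_cases hb0 : b = 0
      · subst hb0; simp [Matrix.add_apply, h01, h10]; norm_num
      · by_cases hb1 : b = 1
        · subst hb1; simp [Matrix.add_apply, h01, h10]; norm_num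
        · have h0b : ¬(0 : Fin d) = b := fun hh => hb0 hh.symm
          have h1b : ¬(1 : Fin d) = b := fun hh => hb1 hh.symm
          simp [Matrix.add_apply, h01, h10, h0b, h1b]
    · by_cases ha1 : a = 1
      · subst ha1
        by_cases hb0 : b = 0
        · subst hb0; simp [Matrix.add_apply, h01, h10]; norm_num
        · by_cases hb1 : b = 1
          · subst hb1; simp [Matrix.add_apply, h01, h10]; norm_num
          · have h0b : ¬(0 : Fin d) = b := fun hh => hb0 hh.symm
            have h1b : ¬(1 : Fin d) = b := fun hh => hb1 hh.symm
            simp [Matrix.add_apply, h01, h10, h0b, h1b]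
      · have h0a : ¬(0 : Fin d) = a := fun hh => ha0 hh.symm
        have h1a : ¬(1 : Fin d) = a := fun hh => ha1 hh.symm
        simp [Matrix.add_apply, h0a, h1a]
  have key := h u hu_mem (Matrix.single 0 0 1)
  rw [C1] at key
  rw [huH] at key
  have himg : ∀ (i j : Fin d) (c : ℂ), D (Matrix.single i j c) = c • D (Matrix.single i j 1) := by
    intro i j c
    rw [show Matrix.single i j c = c • Matrix.single i j 1 from by
      rw [smul_single, smul_eq_mul, mul_one], _root_.map_smul]
  rw [map_add, map_add, map_add, himg 0 0 (9/25), himg 0 1 (12/25), himg 1 0 (12/25), himg 1 1 (16/25), hu_def] at key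
  simp only [add_mul, mul_add, one_mul, mul_one] at key
  have ee := congrFun (congrFun key 0) 1
  simp only [Matrix.add_apply, Matrix.smul_apply, smul_eq_mul,
    mul_single_apply_same, mul_single_apply_of_ne,
    single_mul_apply_same, single_mul_apply_of_ne, h01, h10,
    ne_eq, not_false_eq_true, add_zero, zero_add] at ee
  rw [vanish2 0 0 1 h01, vanish2 0 1 0 h10,
    vanish1 1 0 0 1 h10 (fun hh => h10 hh.1),
    vanish2 1 0 1 h01] at ee
  linear_combination (25/12 : ℂ) * ee

private lemma final_lemma [NeZero d] (hd : 2 ≤ d)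
    (hTP : ∀ A, (D A).trace = A.trace)
    (F α β : ℂ)
    (vanish1 : ∀ i j k l : Fin d, i ≠ j → ¬(i = k ∧ j = l) → (D (Matrix.single i j 1)) k l = 0)
    (vanish2 : ∀ i k l : Fin d, k ≠ l → (D (Matrix.single i i 1)) k l = 0)
    (hc : ∀ i j : Fin d, i ≠ j → (D (Matrix.single i j 1)) i j = F)
    (hαa : ∀ i : Fin d, (D (Matrix.single i i 1)) i i = α)
    (hβb : ∀ i k : Fin d, i ≠ k → (D (Matrix.single i i 1)) k k = β)
    (heq : F = α - β) :
    ∀ A, D A = F • A + ((1 - F) * (A.trace / d)) • (1 : Matrix (Fin d) (Fin d) ℂ) := by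

  have h01 : (0 : Fin d) ≠ 1 := by
    intro hh
    have := congrArg Fin.val hh
    simp [Fin.val_one'] at this
    omega
  have hd0 : (d : ℂ) ≠ 0 := Nat.cast_ne_zero.2 (by omega)
  -- trace equation
  have htr1 : (Matrix.single (0:Fin d) 0 (1:ℂ)).trace = 1 := by
    simp [Matrix.trace, Matrix.diag, Matrix.single, Finset.sum_ite_eq]
  have hTre := hTP (Matrix.single 0 0 1)
  rw [htr1] at hTre
  have hdiagval : ∀ k : Fin d, (D (Matrix.single (0:Fin d) 0 1)) k k
      = β + (if k = 0 then α - β else 0) := by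
    intro k
    by_cases hk : k = 0
    · subst hk
      rw [hαa 0, if_pos rfl]
      ring
    · rw [hβb 0 k (fun hh => hk hh.symm), if_neg hk]
      ring
  have hsum : (D (Matrix.single (0:Fin d) 0 1)).trace = (d:ℂ) * β + (α - β) := by
    rw [Matrix.trace]
    have : ∀ k ∈ Finset.univ, (D (Matrix.single (0:Fin d) 0 1)).diag k
        = β + (if k = 0 then α - β else 0) := fun k _ => hdiagval k
    rw [Finset.sum_congr rfl this, Finset.sum_add_distrib, Finset.sum_const,
      Finset.sum_ite_eq' Finset.univ (0 : Fin d) (fun _ => α - β)]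
    simp [mul_comm]
  have hβd : (d:ℂ) * β = 1 - F := by
    rw [hsum] at hTre
    linear_combination hTre + heq
  -- uniform description of D on basis matrices
  have hDE : ∀ i j k l : Fin d, (D (Matrix.single i j 1)) k l
      = F * (if i = k ∧ j = l then 1 else 0) + (if i = j ∧ k = l then β else 0) := by
    intro i j k l
    by_cases hij : i = j
    · subst hij
      by_cases hkl : k = l
      · subst hkl
        by_cases hik : i = k
        · subst hik
          rw [hαa i, if_pos ⟨rfl, rfl⟩, if_pos ⟨rfl, rfl⟩]
          linear_combination -heq
        · rw [hβb i k hik, if_neg (fun hh => hik hh.1), if_pos ⟨rfl, rfl⟩]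
          ring
      · rw [vanish2 i k l hkl, if_neg (fun hh => hkl (hh.1.symm.trans hh.2)),
          if_neg (fun hh => hkl hh.2)]
        ring
    · by_cases hkl2 : i = k ∧ j = l
      · obtain ⟨rfl, rfl⟩ := hkl2
        rw [hc i j hij, if_pos ⟨rfl, rfl⟩, if_neg (fun hh => hij hh.1)]
        ring
      · rw [vanish1 i j k l hij hkl2, if_neg hkl2, if_neg (fun hh => hij hh.1)]
        ring
  -- final assembly
  intro A
  ext k l
  have expand : (D A) k l = ∑ i, ∑ j, A i j * ((D (Matrix.single i j 1)) k l) := by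
    conv_lhs => rw [matrix_eq_sum_single A]
    rw [map_sum, Matrix.sum_apply]
    refine Finset.sum_congr rfl fun i _ => ?_
    rw [map_sum, Matrix.sum_apply]
    refine Finset.sum_congr rfl fun j _ => ?_
    rw [show Matrix.single i j (A i j) = A i j • Matrix.single i j 1 from by
      rw [smul_single, smul_eq_mul, mul_one], _root_.map_smul, Matrix.smul_apply,
      smul_eq_mul]
  rw [expand]
  simp only [hDE]
  have lhs_eval : ∑ i, ∑ j, A i j * (F * (if i = k ∧ j = l then 1 else 0)
      + (if i = j ∧ k = l then β else 0))
      = F * A k l + (if k = l then A.trace * β else 0) := by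
    have split : ∀ i j : Fin d, A i j * (F * (if i = k ∧ j = l then 1 else 0)
        + (if i = j ∧ k = l then β else 0))
        = (if i = k ∧ j = l then A i j * F else 0)
          + (if i = j ∧ k = l then A i j * β else 0) := by
      intro i j
      by_cases h1 : i = k ∧ j = l <;> by_cases h2 : i = j <;> by_cases h3 : k = l <;>
        simp [h1, h2, h3] <;> (try ring) <;> (try (split_ifs <;> ring))
    simp only [split, Finset.sum_add_distrib]
    congr 1
    · simp [ite_and, Finset.sum_ite_eq', mul_comm]
    · by_cases hkl : k = l
      · rw [if_pos hkl]
        simp only [hkl, and_true]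
        rw [Matrix.trace, Finset.sum_mul]
        refine (Finset.sum_congr rfl fun i _ => ?_)
        rw [Finset.sum_ite_eq Finset.univ i (fun j => A i j * β)]
        simp [Matrix.diag]
      · simp [hkl]
  rw [lhs_eval]
  simp only [Matrix.add_apply, Matrix.smul_apply, Matrix.one_apply, smul_eq_mul]
  by_cases hkl : k = l
  · rw [if_pos hkl, if_pos hkl, mul_one]
    field_simp
    linear_combination A.trace * hβd
  · rw [if_neg hkl, if_neg hkl]
    ring

end Main

/-- Lemma A6: a trace-preserving linear map on d×d complex matrices
commutes with every unitary map iff it is a depolarising map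
`D_F(A) = F·A + (1−F)·(Tr(A)/d)·I` for some scalar `F`. -/
theorem commutes_with_unitaries_iff_depolarising {d : ℕ} (hd : 2 ≤ d)
    (D : Matrix (Fin d) (Fin d) ℂ →ₗ[ℂ] Matrix (Fin d) (Fin d) ℂ)
    (hTP : ∀ A, (D A).trace = A.trace) :
    (∀ u ∈ Matrix.unitaryGroup (Fin d) ℂ, ∀ A, D (u * A * uᴴ) = u * D A * uᴴ) ↔
    (∃ F : ℂ, ∀ A,
      D A = F • A + ((1 - F) * (A.trace / d)) • (1 : Matrix (Fin d) (Fin d) ℂ)) := by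
  haveI : NeZero d := ⟨by omega⟩
  constructor
  · intro h
    have h01 : (0 : Fin d) ≠ 1 := by
      intro hh
      have := congrArg Fin.val hh
      simp [Fin.val_one'] at this
      omega
    obtain ⟨vanish1, vanish2⟩ := vanish_lemmas D h
    have permstep := permstep_lemma D h
    have heq := heq_lemma D hd h vanish1 vanish2
    have hc : ∀ i j : Fin d, i ≠ j →
        (D (Matrix.single i j 1)) i j = (D (Matrix.single (0:Fin d) 1 1)) 0 1 := by
      intro i j hij
      obtain ⟨σ, hσ0, hσ1⟩ := pair_perm h01 hij
      have hps := permstep σ 0 1 0 1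
      rw [hσ0, hσ1] at hps
      exact hps
    have hαa : ∀ i : Fin d,
        (D (Matrix.single i i 1)) i i = (D (Matrix.single (0:Fin d) 0 1)) 0 0 := by
      intro i
      have hps := permstep (Equiv.swap 0 i) 0 0 0 0
      rw [Equiv.swap_apply_left] at hps
      exact hps
    have hβb : ∀ i k : Fin d, i ≠ k →
        (D (Matrix.single i i 1)) k k = (D (Matrix.single (0:Fin d) 0 1)) 1 1 := by
      intro i k hik
      obtain ⟨σ, hσ0, hσ1⟩ := pair_perm h01 hik
      have hps := permstep σ 0 0 1 1
      rw [hσ0, hσ1] at hps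
      exact hps
    exact ⟨_, final_lemma D hd hTP _ _ _ vanish1 vanish2 hc hαa hβb heq⟩
  · rintro ⟨F, hF⟩ u hu A
    have huu : uᴴ * u = 1 := by
      have := (Matrix.mem_unitaryGroup_iff').mp hu
      rwa [Matrix.star_eq_conjTranspose] at this
    have huu' : u * uᴴ = 1 := by
      have := (Matrix.mem_unitaryGroup_iff).mp hu
      rwa [Matrix.star_eq_conjTranspose] at this
    have htr : (u * A * uᴴ).trace = A.trace := by
      rw [Matrix.trace_mul_cycle, huu, Matrix.one_mul]
    rw [hF (u * A * uᴴ), hF A, htr]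
    simp only [Matrix.mul_add, Matrix.add_mul, Matrix.mul_smul, Matrix.smul_mul,
      Matrix.mul_one, huu']
end

section
/- Let m = ({ρ_i}_{i∈I}, {𝓜_j}_{j∈J}, {E_k}_{k∈K}) and m' = ({ρ'_i}, {𝓜'_j}, {E'_k}) be distribution-equivalent physical representations on d×d complex matrices with the same index types. If m is complete (both {ρ_i} and {E_k} span the space of d×d complex matrices), then m' is complete (both {ρ'_i} and {E'_k} span the space of d×d complex matrices). -/
open Matrix
open scoped ComplexOrder

noncomputable section

/-- The trace pairing against a family of matrices, as a linear map. -/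
def pairL {d : ℕ} {K : Type} (E : K → Mat d) : Mat d →ₗ[ℂ] (K → ℂ) where
  toFun X := fun k => (E k * X).trace
  map_add' X Y := by ext k; simp [Matrix.mul_add]
  map_smul' c X := by ext k; simp [Matrix.mul_smul]

lemma trace_stdBasisMatrix_mul' {d : ℕ} (a b : Fin d) (X : Mat d) :
    (single a b (1 : ℂ) * X).trace = X b a := by
  simp only [Matrix.trace, Matrix.mul_apply, Matrix.single, Matrix.diag,
    Matrix.of_apply, ite_mul, one_mul, zero_mul, ite_and]
  simp [Finset.sum_ite_eq]

lemma pairL_inj {d : ℕ} {K : Type} (E : K → Mat d)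
    (hE : Submodule.span ℂ (Set.range E) = ⊤) :
    Function.Injective (pairL E) := by
  rw [← LinearMap.ker_eq_bot, LinearMap.ker_eq_bot']
  intro X hX
  have h0 : ∀ Y : Mat d, (Y * X).trace = 0 := by
    intro Y
    have hmem : Y ∈ Submodule.span ℂ (Set.range E) := hE ▸ Submodule.mem_top
    induction hmem using Submodule.span_induction with
    | mem y hy => obtain ⟨k, rfl⟩ := hy; exact congrFun hX k
    | zero => simp
    | add y z _ _ hy hz => simp [Matrix.add_mul, hy, hz]
    | smul c y _ hy => simp [Matrix.smul_mul, hy]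
  ext a b
  have := h0 (single b a 1)
  rwa [trace_stdBasisMatrix_mul'] at this

lemma span_top_of_pair {d : ℕ} {I K : Type} (E E' : K → Mat d) (ρ ρ' : I → Mat d)
    (hE : Submodule.span ℂ (Set.range E) = ⊤)
    (hρ : Submodule.span ℂ (Set.range ρ) = ⊤)
    (h : ∀ k i, (E k * ρ i).trace = (E' k * ρ' i).trace) :
    Submodule.span ℂ (Set.range ρ') = ⊤ := by
  have hu := pairL_inj E hE
  have hcomp : (pairL E') ∘ ρ' = (pairL E) ∘ ρ := by
    funext i; ext k
    exact (h k i).symm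
  have key : Submodule.map (pairL E') (Submodule.span ℂ (Set.range ρ')) =
      LinearMap.range (pairL E) := by
    rw [Submodule.map_span, ← Set.range_comp, hcomp, LinearMap.range_eq_map, ← hρ,
      Submodule.map_span, ← Set.range_comp]
  have h1 : Module.finrank ℂ (Mat d) ≤
      Module.finrank ℂ (Submodule.span ℂ (Set.range ρ')) := by
    calc Module.finrank ℂ (Mat d)
        = Module.finrank ℂ (LinearMap.range (pairL E)) :=
          (LinearMap.finrank_range_of_inj hu).symm
      _ = Module.finrank ℂ (Submodule.map (pairL E')
            (Submodule.span ℂ (Set.range ρ'))) := by rw [key]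
      _ ≤ _ := Submodule.finrank_map_le _ _
  exact Submodule.eq_top_of_finrank_eq
    (le_antisymm (Submodule.finrank_le _) h1)

/-- of two distribution-equivalent physical representations, if one is
complete (its initial states span the matrix space and so do its measurement
operators), then so is the other. -/
theorem completeness_transfers {d : ℕ} (hd : 2 ≤ d) {I J K : Type}
    (m m' : QRep d I J K) (hm : m.Physical) (hm' : m'.Physical)
    (heq : DistEquiv m m')
    (hρ : Submodule.span ℂ (Set.range m.ρ) = ⊤)
    (hE : Submodule.span ℂ (Set.range m.E) = ⊤) :
    Submodule.span ℂ (Set.range m'.ρ) = ⊤ ∧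
    Submodule.span ℂ (Set.range m'.E) = ⊤ := by
  have h0 : ∀ k i, (m.E k * m.ρ i).trace = (m'.E k * m'.ρ i).trace :=
    fun k i => heq i [] k
  refine ⟨span_top_of_pair m.E m'.E m.ρ m'.ρ hE hρ h0, ?_⟩
  refine span_top_of_pair m.ρ m'.ρ m.E m'.E hρ hE ?_
  intro k i
  rw [Matrix.trace_mul_comm, Matrix.trace_mul_comm (m'.ρ k), h0]
end
end

section
/- Let m = ({ρ_i}_{i∈I}, {𝓜_j}_{j∈J}, {E_k}_{k∈K}) and m' = ({ρ'_i}, {𝓜'_j}, {E'_k}) be distribution-equivalent physical representations on d×d complex matrices with the same index types, and suppose both m and m' are complete. Then m and m' are related by a similarity transformation: there exists an invertible linear map T on d×d complex matrices such that ρ'_i = T⁻¹(ρ_i) for all i ∈ I, 𝓜'_j = T⁻¹∘𝓜_j∘T for all j ∈ J, and E'_k = T*(E_k) for all k ∈ K, where T* is the dual map for the trace pairing, Tr[T*(A)B] = Tr[A T(B)]. -/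
open Matrix
open scoped ComplexOrder

noncomputable section

lemma trace_stdBasis_mul {d : ℕ} (i j : Fin d) (X : Mat d) :
    (single i j (1:ℂ) * X).trace = X j i := by
  simp [Matrix.trace, Matrix.diag, Matrix.mul_apply, Matrix.single, ite_and,
    Finset.sum_ite_eq]

lemma trace_mul_stdBasis {d : ℕ} (i j : Fin d) (X : Mat d) :
    (X * single i j (1:ℂ)).trace = X j i := by
  simp [Matrix.trace, Matrix.diag, Matrix.mul_apply, Matrix.single, ite_and,
    Finset.sum_ite_eq]

lemma eq_zero_of_trace_mul_left {d : ℕ} (X : Mat d) (h : ∀ A : Mat d, (A * X).trace = 0) :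
    X = 0 := by
  ext a b
  have := h (single b a (1:ℂ))
  rwa [trace_stdBasis_mul] at this

lemma eq_zero_of_trace_mul_right {d : ℕ} (X : Mat d) (h : ∀ B : Mat d, (X * B).trace = 0) :
    X = 0 := by
  ext a b
  have := h (single b a (1:ℂ))
  rwa [trace_mul_stdBasis] at this

/-- If a spanning family pairs to zero with `X` under the trace pairing, then `X = 0`. -/
lemma eq_zero_of_span_trace {d : ℕ} {ι : Type} (E : ι → Mat d)
    (hE : Submodule.span ℂ (Set.range E) = ⊤) (X : Mat d)
    (h : ∀ k, (E k * X).trace = 0) : X = 0 := by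
  apply eq_zero_of_trace_mul_left
  intro A
  set f : Mat d →ₗ[ℂ] ℂ :=
    (Matrix.traceLinearMap (Fin d) ℂ ℂ).comp (LinearMap.mulRight ℂ X) with hf
  have hker : Submodule.span ℂ (Set.range E) ≤ LinearMap.ker f := by
    rw [Submodule.span_le]
    rintro _ ⟨k, rfl⟩
    simpa [hf] using h k
  have : f A = 0 := by
    have : A ∈ LinearMap.ker f := hker (hE ▸ Submodule.mem_top)
    exact this
  simpa [hf] using this

/-- Lemma A2 of the gate set tomography section: two
distribution-equivalent complete physical representations are related by a similarity
transformation: there is an invertible linear map `T` with `ρ'_i = T⁻¹(ρ_i)`,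
`𝓜'_j = T⁻¹∘𝓜_j∘T` and `E'_k = T*(E_k)`, where `T*` is the dual of `T` for the trace
pairing. -/
theorem distribution_equivalent_related_by_gauge {d : ℕ} (hd : 2 ≤ d) {I J K : Type}
    (m m' : QRep d I J K) (hm : m.Physical) (hm' : m'.Physical)
    (heq : DistEquiv m m')
    (hρ : Submodule.span ℂ (Set.range m.ρ) = ⊤)
    (hE : Submodule.span ℂ (Set.range m.E) = ⊤)
    (hρ' : Submodule.span ℂ (Set.range m'.ρ) = ⊤)
    (hE' : Submodule.span ℂ (Set.range m'.E) = ⊤) :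
    ∃ T : Mat d ≃ₗ[ℂ] Mat d, ∃ Tdual : Mat d →ₗ[ℂ] Mat d,
      (∀ A B : Mat d, (Tdual A * B).trace = (A * T B).trace) ∧
      (∀ i, m'.ρ i = T.symm (m.ρ i)) ∧
      (∀ j A, m'.M j A = T.symm (m.M j (T A))) ∧
      (∀ k, m'.E k = Tdual (m.E k)) := by
  classical
  obtain ⟨b, hbsub, hbspan, hbli⟩ := exists_linearIndependent ℂ (Set.range m'.ρ)
  rw [hρ'] at hbspan
  let Bas : Module.Basis b ℂ (Mat d) := Module.Basis.mk hbli (by rw [Subtype.range_coe, hbspan])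
  have hBas : ∀ x : b, Bas x = (x : Mat d) := fun x => Module.Basis.mk_apply hbli _ x
  -- choice of index for each basis element
  have hidx : ∀ x : b, ∃ i : I, m'.ρ i = (x : Mat d) := fun x => hbsub x.2
  choose idx hidx using hidx
  -- the gauge transformation on the spanning basis
  set T0 : Mat d →ₗ[ℂ] Mat d := Bas.constr ℂ (fun x => m.ρ (idx x)) with hT0
  have hT0b : ∀ x : b, T0 (x : Mat d) = m.ρ (idx x) := by
    intro x
    rw [← hBas x, hT0, Module.Basis.constr_basis]
  -- key property: T0 intertwines the trace pairings
  have key : ∀ (X : Mat d) (k : K), (m.E k * T0 X).trace = (m'.E k * X).trace := by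
    intro X k
    set f1 : Mat d →ₗ[ℂ] ℂ :=
      ((Matrix.traceLinearMap (Fin d) ℂ ℂ).comp (LinearMap.mulLeft ℂ (m.E k))).comp T0 with hf1
    set f2 : Mat d →ₗ[ℂ] ℂ :=
      (Matrix.traceLinearMap (Fin d) ℂ ℂ).comp (LinearMap.mulLeft ℂ (m'.E k)) with hf2
    have : f1 = f2 := by
      apply Module.Basis.ext Bas
      intro x
      have h1 : f1 (Bas x) = (m.E k * m.ρ (idx x)).trace := by
        simp [hf1, hBas x, hT0b x]
      have h2 : f2 (Bas x) = (m'.E k * m'.ρ (idx x)).trace := by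
        simp [hf2, hBas x, hidx x]
      rw [h1, h2]
      exact heq (idx x) [] k
    have := congrArg (fun g => g X) this
    simpa [hf1, hf2] using this
  -- uniqueness from the spanning measurement families
  have uniqE : ∀ X Y : Mat d, (∀ k, (m.E k * X).trace = (m.E k * Y).trace) → X = Y := by
    intro X Y h
    have : X - Y = 0 := by
      apply eq_zero_of_span_trace m.E hE
      intro k
      simp [Matrix.mul_sub, Matrix.trace_sub, h k]
    exact sub_eq_zero.mp this
  -- T0 is injective, hence bijective
  have hinj : Function.Injective T0 := by
    rw [injective_iff_map_eq_zero]
    intro X hX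
    apply eq_zero_of_span_trace m'.E hE'
    intro k
    rw [← key X k, hX]
    simp
  have hbij : Function.Bijective T0 :=
    ⟨hinj, (LinearMap.injective_iff_surjective).mp hinj⟩
  let T : Mat d ≃ₗ[ℂ] Mat d := LinearEquiv.ofBijective T0 hbij
  have hTapp : ∀ X, T X = T0 X := fun X => rfl
  -- states
  have hρmap : ∀ i, T0 (m'.ρ i) = m.ρ i := by
    intro i
    apply uniqE
    intro k
    rw [key (m'.ρ i) k]
    exact (heq i [] k).symm
  -- maps
  have hMmap : ∀ (j : J) (X : Mat d), T0 (m'.M j X) = m.M j (T0 X) := by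
    intro j X
    apply uniqE
    intro k
    rw [key (m'.M j X) k]
    -- show (m'.E k * m'.M j X).trace = (m.E k * m.M j (T0 X)).trace
    set g1 : Mat d →ₗ[ℂ] ℂ :=
      (Matrix.traceLinearMap (Fin d) ℂ ℂ).comp
        ((LinearMap.mulLeft ℂ (m'.E k)).comp (m'.M j)) with hg1
    set g2 : Mat d →ₗ[ℂ] ℂ :=
      (Matrix.traceLinearMap (Fin d) ℂ ℂ).comp
        (((LinearMap.mulLeft ℂ (m.E k)).comp (m.M j)).comp T0) with hg2
    have : g1 = g2 := by
      apply Module.Basis.ext Bas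
      intro x
      have h1 : g1 (Bas x) = (m'.E k * m'.M j (m'.ρ (idx x))).trace := by
        simp [hg1, hBas x, hidx x]
      have h2 : g2 (Bas x) = (m.E k * m.M j (m.ρ (idx x))).trace := by
        simp [hg2, hBas x, hT0b x]
      rw [h1, h2]
      exact (heq (idx x) [j] k).symm
    have := congrArg (fun g => g X) this
    simpa [hg1, hg2] using this
  -- the dual map
  let Tdual : Mat d →ₗ[ℂ] Mat d :=
    { toFun := fun A => Matrix.of fun a c => (A * T0 (single c a (1:ℂ))).trace
      map_add' := by
        intro A B
        ext a c
        simp [Matrix.add_mul, Matrix.trace_add]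
      map_smul' := by
        intro r A
        ext a c
        simp [Matrix.smul_mul, Matrix.trace_smul] }
  have hTdapp : ∀ (A : Mat d) (a c : Fin d),
      Tdual A a c = (A * T0 (single c a (1:ℂ))).trace := fun A a c => rfl
  have hdual : ∀ A B : Mat d, (Tdual A * B).trace = (A * T0 B).trace := by
    intro A B
    induction B using Matrix.induction_on' with
    | h_zero => simp
    | h_add p q hp hq => simp [Matrix.mul_add, Matrix.trace_add, hp, hq]
    | h_std_basis i j x =>
      have hx : single i j x = x • single i j (1:ℂ) := by
        rw [smul_single]; simp
      rw [hx, Matrix.mul_smul, Matrix.trace_smul, _root_.map_smul, mul_smul_comm,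
        Matrix.trace_smul, trace_mul_stdBasis]
      rw [hTdapp A j i]
  refine ⟨T, Tdual, ?_, ?_, ?_, ?_⟩
  · intro A B
    rw [hdual A B, hTapp]
  · intro i
    rw [LinearEquiv.eq_symm_apply]
    exact hρmap i
  · intro j A
    rw [LinearEquiv.eq_symm_apply]
    exact hMmap j A
  · intro k
    have : Tdual (m.E k) - m'.E k = 0 := by
      apply eq_zero_of_trace_mul_right
      intro B
      rw [Matrix.sub_mul, Matrix.trace_sub, hdual (m.E k) B, key B k]
      ring
    have := sub_eq_zero.mp this
    exact this.symm
end
end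

section
/- Let m = ({ρ_i}_{i∈I}, {𝓜_j}_{j∈J}, {E_k}_{k∈K}) and m' = ({ρ'_i}, {𝓜'_j}, {E'_k}) be distribution-equivalent representations on d×d complex matrices with the same index types, such that the families {ρ_i} and {E_k} are complete. Suppose there is an invertible linear map S on matrices with ρ'_i = S⁻¹(ρ_i) for all i ∈ I and E'_k = S*(E_k) for all k ∈ K, where S* is the dual map for the trace pairing. Then the representations are related by the same transformation: 𝓜'_j = S⁻¹∘𝓜_j∘S for all j ∈ J. -/
open Matrix
open scoped ComplexOrder

noncomputable section

lemma trace_pairing_eq_zero {d : ℕ} {K : Type} (E : K → Mat d)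
    (hE : Submodule.span ℂ (Set.range E) = ⊤) (X : Mat d)
    (h : ∀ k, ((E k) * X).trace = 0) : X = 0 := by
  have hall : ∀ B : Mat d, (B * X).trace = 0 := by
    intro B
    have hB : B ∈ Submodule.span ℂ (Set.range E) := hE ▸ Submodule.mem_top
    induction hB using Submodule.span_induction with
    | mem x hx => obtain ⟨k, rfl⟩ := hx; exact h k
    | zero => simp
    | add x y _ _ hx hy => simp [add_mul, Matrix.trace_add, hx, hy]
    | smul c x _ hx => simp [smul_mul_assoc, hx]
  ext a b
  have := hall (Matrix.single b a 1)
  simpa [Matrix.trace, Matrix.diag, Matrix.mul_apply, Matrix.single,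
    ite_and, Finset.sum_ite_eq] using this

/-- Lemma A3 of the gate set tomography section: if two
distribution-equivalent representations have complete sets of initial states and
measurement operators related by an invertible transformation `S` (states by `S⁻¹`,
measurements by the dual `S*`), then their evolution maps are related by the same
transformation: `𝓜'_j = S⁻¹∘𝓜_j∘S`. -/
theorem states_measurements_determine_gauge {d : ℕ} (hd : 2 ≤ d) {I J K : Type}
    (m m' : QRep d I J K) (heq : DistEquiv m m')
    (hρ : Submodule.span ℂ (Set.range m.ρ) = ⊤)
    (hE : Submodule.span ℂ (Set.range m.E) = ⊤)
    (S : Mat d ≃ₗ[ℂ] Mat d) (Sdual : Mat d →ₗ[ℂ] Mat d)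
    (hdual : ∀ A B : Mat d, (Sdual A * B).trace = (A * S B).trace)
    (hρ' : ∀ i, m'.ρ i = S.symm (m.ρ i))
    (hE' : ∀ k, m'.E k = Sdual (m.E k)) :
    ∀ j A, m'.M j A = S.symm (m.M j (S A)) := by
  intro j
  have key : ∀ i, m'.M j (S.symm (m.ρ i)) = S.symm (m.M j (m.ρ i)) := by
    intro i
    have h0 : ∀ k, (m.E k * (m.M j (m.ρ i) - S (m'.M j (S.symm (m.ρ i))))).trace = 0 := by
      intro k
      have hh := heq i [j] k
      simp only [QRep.prob, List.foldl] at hh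
      rw [hρ' i, hE' k, hdual] at hh
      rw [mul_sub, Matrix.trace_sub, hh, sub_self]
    have h1 := trace_pairing_eq_zero m.E hE _ h0
    have h2 : m.M j (m.ρ i) = S (m'.M j (S.symm (m.ρ i))) := sub_eq_zero.mp h1
    rw [h2, LinearEquiv.symm_apply_apply]
  have hspan : Submodule.span ℂ ((S.symm : Mat d →ₗ[ℂ] Mat d) '' Set.range m.ρ) = ⊤ := by
    rw [Submodule.span_image, hρ, Submodule.map_top, LinearMap.range_eq_top]
    exact S.symm.surjective
  have hext := LinearMap.ext_on hspan (f := m'.M j)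
    (g := (S.symm : Mat d →ₗ[ℂ] Mat d) ∘ₗ (m.M j) ∘ₗ (S : Mat d →ₗ[ℂ] Mat d)) ?_
  · intro A
    have := LinearMap.congr_fun hext A
    simpa using this
  · rintro x ⟨y, ⟨i, rfl⟩, rfl⟩
    simpa using key i
end
end

section
/- Let ρ be a d×d Hermitian complex matrix with ρ ≠ (Tr(ρ)/d)·I, and let F > 1 be real. Then D_F(ρ) is not related to ρ by any unitary or antiunitary transformation: for every unitary matrix u, D_F(ρ) ≠ uρu† and D_F(ρ) ≠ uρᵀu†. -/
open Matrix
open scoped ComplexOrder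

noncomputable section

/-- The depolarising map `D_F(A) = F·A + (1−F)·(Tr(A)/d)·I`. -/
def DFmap (d : ℕ) (F : ℂ) : Mat d →ₗ[ℂ] Mat d :=
  F • LinearMap.id +
    ((1 - F) / d) • ((Matrix.traceLinearMap (Fin d) ℂ ℂ).smulRight (1 : Mat d))

lemma trace_sq_pos {d : ℕ} (σ : Mat d) (hσ : σ.IsHermitian) (h0 : σ ≠ 0) :
    0 < (σ * σ).trace := by
  have hentry : ∀ i j, σ i j * σ j i = (Complex.normSq (σ i j) : ℂ) := by
    intro i j
    have : σ j i = star (σ i j) := by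
      conv_lhs => rw [← hσ]
      rfl
    rw [this, show star (σ i j) = (starRingEnd ℂ) (σ i j) from rfl, Complex.mul_conj]
  have htr : (σ * σ).trace = ((∑ i, ∑ j, Complex.normSq (σ i j) : ℝ) : ℂ) := by
    simp only [Matrix.trace, Matrix.diag, Matrix.mul_apply, hentry]
    push_cast
    rfl
  rw [htr]
  rw [Complex.zero_lt_real]
  have hnonneg : ∀ i ∈ Finset.univ, (0:ℝ) ≤ ∑ j, Complex.normSq (σ i j) := by
    intro i _
    exact Finset.sum_nonneg fun j _ => Complex.normSq_nonneg _
  rcases lt_or_eq_of_le (Finset.sum_nonneg hnonneg) with h | h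
  · exact h
  · exfalso
    apply h0
    ext i j
    have h1 := (Finset.sum_eq_zero_iff_of_nonneg hnonneg).1 h.symm i (Finset.mem_univ i)
    have h2 := (Finset.sum_eq_zero_iff_of_nonneg
      (fun j _ => Complex.normSq_nonneg (σ i j))).1 h1 j (Finset.mem_univ j)
    simpa using Complex.normSq_eq_zero.1 h2

/-- for a non-trivial Hermitian matrix `ρ` (i.e. `ρ ≠ (Tr(ρ)/d)·I`) and
real `F > 1`, the matrix `D_F(ρ)` is not related to `ρ` by any unitary or antiunitary
transformation. -/
theorem depolarised_not_unitarily_related {d : ℕ} (hd : 2 ≤ d)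
    (ρ : Mat d) (hρ : ρ.IsHermitian)
    (hnt : ρ ≠ (ρ.trace / d) • (1 : Mat d))
    (F : ℝ) (hF : 1 < F) :
    ∀ u ∈ Matrix.unitaryGroup (Fin d) ℂ,
      DFmap d (F : ℂ) ρ ≠ u * ρ * uᴴ ∧ DFmap d (F : ℂ) ρ ≠ u * ρᵀ * uᴴ := by
  intro u hu
  set t : ℂ := ρ.trace with ht
  set s : ℂ := (ρ * ρ).trace with hs
  have hd0 : (d : ℂ) ≠ 0 := by
    exact Nat.cast_ne_zero.2 (by omega)
  -- trace of ρ is real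
  have htreal : star t = t := by
    rw [ht, ← Matrix.trace_conjTranspose, hρ.eq]
  -- the traceless part
  set σ : Mat d := ρ - (t / d) • 1 with hσdef
  have hσh : σ.IsHermitian := by
    rw [Matrix.IsHermitian, hσdef, Matrix.conjTranspose_sub, hρ.eq,
      Matrix.conjTranspose_smul, Matrix.conjTranspose_one]
    congr 1
    rw [star_div₀, htreal]
    norm_num
  have hσ0 : σ ≠ 0 := by
    rw [hσdef, sub_ne_zero]
    intro hc
    exact hnt hc
  have hpos : 0 < (σ * σ).trace := trace_sq_pos σ hσh hσ0
  have hσtr : (σ * σ).trace = s - t ^ 2 / d := by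
    rw [hσdef]
    simp only [Matrix.sub_mul, Matrix.mul_sub, Matrix.smul_mul, Matrix.mul_smul,
      Matrix.one_mul, Matrix.mul_one, Matrix.trace_sub, Matrix.trace_smul,
      Matrix.trace_one, smul_eq_mul, smul_smul, ← hs, ← ht]
    have : ((Fintype.card (Fin d) : ℂ)) = (d : ℂ) := by simp
    rw [this]
    field_simp
    ring
  -- trace of (DFmap ρ)^2
  have hDval : DFmap d (F : ℂ) ρ = (F : ℂ) • ρ + (((1 - (F:ℂ)) * t) / d) • 1 := by
    simp only [DFmap, LinearMap.add_apply, LinearMap.smul_apply, LinearMap.id_apply,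
      LinearMap.smulRight_apply, Matrix.traceLinearMap_apply, ← ht]
    rw [smul_smul]
    ring_nf
  have hDtr : (DFmap d (F : ℂ) ρ * DFmap d (F : ℂ) ρ).trace
      = (F:ℂ)^2 * s + 2 * (F:ℂ) * ((1 - (F:ℂ)) * t / d) * t + ((1 - (F:ℂ)) * t / d)^2 * d := by
    rw [hDval]
    simp only [Matrix.add_mul, Matrix.mul_add, Matrix.smul_mul, Matrix.mul_smul,
      Matrix.one_mul, Matrix.mul_one, Matrix.trace_add, Matrix.trace_smul,
      Matrix.trace_one, smul_eq_mul, smul_smul, ← hs, ← ht]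
    have : ((Fintype.card (Fin d) : ℂ)) = (d : ℂ) := by simp
    rw [this]
    ring
  have hF2 : (F:ℂ)^2 - 1 ≠ 0 := by
    intro hc
    have : ((F^2 - 1 : ℝ) : ℂ) = 0 := by push_cast; linear_combination hc
    have h' : (F:ℝ)^2 - 1 = 0 := by exact_mod_cast this
    nlinarith
  -- the key: if trace(D² ) = s then contradiction
  have key : (DFmap d (F : ℂ) ρ * DFmap d (F : ℂ) ρ).trace ≠ s := by
    intro hc
    rw [hDtr] at hc
    have hzero : s - t ^ 2 / d = 0 := by
      field_simp at hc
      have h3 : ((F:ℂ)^2 - 1) * (s * d - t^2) * (d:ℂ)^2 = 0 := by linear_combination (d:ℂ)^2 * hc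
      have h4 : s * d - t^2 = 0 := by
        rcases mul_eq_zero.1 h3 with h | h
        · rcases mul_eq_zero.1 h with h' | h'
          · exact absurd h' hF2
          · exact h'
        · exact absurd h (pow_ne_zero 2 hd0)
      field_simp
      linear_combination h4
    rw [hσtr, hzero] at hpos
    exact lt_irrefl _ hpos
  have hu1 : uᴴ * u = 1 := by
    have := hu.1
    simpa [Matrix.star_eq_conjTranspose] using this
  constructor
  · intro h
    apply key
    rw [h]
    calc (u * ρ * uᴴ * (u * ρ * uᴴ)).trace
        = (u * (ρ * ρ) * uᴴ).trace := by
          congr 1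
          rw [show u * ρ * uᴴ * (u * ρ * uᴴ) = u * ρ * (uᴴ * u) * ρ * uᴴ by
            simp only [Matrix.mul_assoc], hu1]
          simp only [Matrix.mul_one, Matrix.mul_assoc]
      _ = s := by rw [Matrix.trace_mul_cycle, ← Matrix.mul_assoc, hu1, Matrix.one_mul, hs]
  · intro h
    apply key
    rw [h]
    calc (u * ρᵀ * uᴴ * (u * ρᵀ * uᴴ)).trace
        = (u * (ρᵀ * ρᵀ) * uᴴ).trace := by
          congr 1
          rw [show u * ρᵀ * uᴴ * (u * ρᵀ * uᴴ) = u * ρᵀ * (uᴴ * u) * ρᵀ * uᴴ by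
            simp only [Matrix.mul_assoc], hu1]
          simp only [Matrix.mul_one, Matrix.mul_assoc]
      _ = s := by
          rw [Matrix.trace_mul_cycle, ← Matrix.mul_assoc, hu1, Matrix.one_mul,
            ← Matrix.transpose_mul, Matrix.trace_transpose, hs]
end
end
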